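/- arXiv:2305.17585 — 9 statements merged into one kernel-verified Lean document; each statement's English description precedes it below -/
import Mathlib

section
/- For every complex t with |t| < 1, the family (j, n) ↦ 2^j (t^{(2n−1)·2^j} − t^{(2n)·2^j}), indexed over j ≥ 0, n ≥ 1, is summable with sum t/(1−t). -/
open Filter Finset

private lemma summable_two_pow_mul {r : ℝ} (h0 : 0 ≤ r) (h1 : r < 1) :
    Summable (fun j : ℕ => (2:ℝ)^j * r^(2^j)) := by
  have h : Summable (fun n : ℕ => (n : ℝ)^1 * r^n) :=
    summable_pow_mul_geometric_of_norm_lt_one 1 (by rwa [Real.norm_eq_abs, abs_of_nonneg h0])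
  have hi : Function.Injective (fun j : ℕ => 2^j) := Nat.pow_right_injective le_rfl
  refine (h.comp_injective hi).congr fun j => ?_
  simp [Function.comp]

theorem hasSum_q_multisection (t : ℂ) (ht : ‖t‖ < 1) :
    HasSum (fun p : ℕ × ℕ+ =>
        (2 : ℂ) ^ p.1 * (t ^ ((2 * (p.2 : ℕ) - 1) * 2 ^ p.1) - t ^ ((2 * (p.2 : ℕ)) * 2 ^ p.1)))
      (t / (1 - t)) := by
  set F : ℕ × ℕ+ → ℂ := fun p =>
    (2 : ℂ) ^ p.1 * (t ^ ((2 * (p.2 : ℕ) - 1) * 2 ^ p.1) - t ^ ((2 * (p.2 : ℕ)) * 2 ^ p.1)) with hF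
  set r : ℝ := ‖t‖ with hr
  have h0 : 0 ≤ r := norm_nonneg t
  have hnorm : ‖t‖ = r := rfl
  have hr1 : r < 1 := ht
  have hrpow : ∀ j : ℕ, r ^ (2^j) ≤ r := fun j => by
    calc r^(2^j) ≤ r^1 := pow_le_pow_of_le_one h0 hr1.le Nat.one_le_two_pow
    _ = r := pow_one r
  have hxnorm : ∀ j : ℕ, ‖t ^ (2^j : ℕ)‖ < 1 := fun j => by
    rw [norm_pow, hnorm]; exact lt_of_le_of_lt (hrpow j) hr1
  have h1mr : (0:ℝ) < 1 - r := by linarith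
  have hden : ∀ j : ℕ, 1 - r ≤ ‖1 - t ^ (2^j : ℕ)‖ := fun j => by
    calc 1 - r ≤ 1 - ‖t ^ (2^j:ℕ)‖ := by
          rw [norm_pow, hnorm]; linarith [hrpow j]
    _ = ‖(1:ℂ)‖ - ‖t ^ (2^j:ℕ)‖ := by simp
    _ ≤ ‖1 - t ^ (2^j:ℕ)‖ := norm_sub_norm_le _ _
  have hden' : ∀ j : ℕ, (1:ℂ) - t ^ (2^j:ℕ) ≠ 0 := fun j => by
    intro h
    have h2 := hden j
    rw [h] at h2
    simp at h2
    linarith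
  -- G and its limit
  set G : ℕ → ℂ := fun j => (2:ℂ)^j * t^(2^j:ℕ) * (1 - t^(2^j:ℕ))⁻¹ with hG
  have hGnorm : ∀ j : ℕ, ‖G j‖ ≤ (2:ℝ)^j * r^(2^j) * (1-r)⁻¹ := fun j => by
    simp only [hG, norm_mul, norm_pow, hnorm, norm_inv]
    gcongr
    · simp
    · exact hden j
  have hGtend : Tendsto G atTop (nhds 0) := by
    rw [tendsto_zero_iff_norm_tendsto_zero]
    refine squeeze_zero (fun j => norm_nonneg _) hGnorm ?_
    have := (summable_two_pow_mul h0 hr1).tendsto_atTop_zero.mul_const ((1-r)⁻¹)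
    simpa using this
  -- fiber sums
  set S : ℕ → ℂ := fun j => G j - G (j+1) with hS
  have hfiber : ∀ j : ℕ, HasSum (fun n : ℕ+ => F (j, n)) (S j) := by
    intro j
    set x : ℂ := t ^ (2^j : ℕ) with hx
    have hx1 : ‖x‖ < 1 := hxnorm j
    have hx2 : ‖x^2‖ < 1 := by
      rw [norm_pow]; exact pow_lt_one₀ (norm_nonneg x) hx1 two_ne_zero
    have hgeo : HasSum (fun m : ℕ => ((2:ℂ)^j * (x - x^2)) * (x^2)^m)
        ((2:ℂ)^j * (x - x^2) * (1 - x^2)⁻¹) :=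
      (hasSum_geometric_of_norm_lt_one hx2).mul_left _
    have hkey : (2:ℂ)^j * (x - x^2) * (1 - x^2)⁻¹ = S j := by
      have h1x : (1:ℂ) - x ≠ 0 := hden' j
      have h1px : (1:ℂ) + x ≠ 0 := by
        intro h
        have hxe : x = -1 := by linear_combination h
        rw [hxe] at hx1; simp at hx1
      have hx2' : t ^ (2^(j+1):ℕ) = x^2 := by
        rw [hx, ← pow_mul, pow_succ]
      simp only [hS, hG]
      rw [hx2', ← hx]
      have h1mx2 : (1:ℂ) - x^2 = (1-x)*(1+x) := by ring
      rw [h1mx2]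
      field_simp
      ring
    rw [← hkey, ← Equiv.pnatEquivNat.symm.hasSum_iff]
    refine hgeo.congr_fun fun m => ?_
    have hm : ((Equiv.pnatEquivNat.symm m : ℕ+) : ℕ) = m + 1 := rfl
    simp only [hF, Function.comp, hm]
    have e0 : 2 * (m+1) - 1 = 2*m+1 := by omega
    have e1 : (2*m+1) * 2^j = 2^j * (2*m+1) := by ring
    have e2 : (2 * (m+1)) * 2^j = 2^j * (2*m+2) := by ring
    rw [e0, e1, e2, pow_mul, pow_mul, ← hx]
    ring
  -- summability of F
  have hB : Summable (fun p : ℕ × ℕ+ => ((2:ℝ)^p.1 * 2 * r^(2^p.1)) * r^((p.2:ℕ)-1)) := by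
    have h1 : Summable (fun j : ℕ => (2:ℝ)^j * 2 * r^(2^j)) :=
      ((summable_two_pow_mul h0 hr1).mul_right 2).congr fun j => by ring
    have h2 : Summable (fun n : ℕ+ => r^((n:ℕ)-1)) := by
      rw [← Equiv.pnatEquivNat.symm.summable_iff]
      refine (summable_geometric_of_lt_one h0 hr1).congr fun m => ?_
      simp [Function.comp]
    have h3 : 0 ≤ fun j : ℕ => (2:ℝ)^j * 2 * r^(2^j) := fun j => by positivity
    have h4 : 0 ≤ fun n : ℕ+ => r^((n:ℕ)-1) := fun n => by positivity
    have h5 := Summable.mul_of_nonneg h1 h2 h3 h4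
    exact h5
  have hFsum : Summable F := by
    refine Summable.of_norm (Summable.of_nonneg_of_le (fun _ => norm_nonneg _) ?_ hB)
    rintro ⟨j, n⟩
    obtain ⟨m, hm⟩ : ∃ m, (n:ℕ) = m + 1 := ⟨(n:ℕ)-1, by have := n.pos; omega⟩
    have hj1 : 1 ≤ 2^j := Nat.one_le_two_pow
    have hea : 2^j + m ≤ (2*(m+1)-1) * 2^j := by
      have : 2*(m+1)-1 = 2*m+1 := by omega
      rw [this]; nlinarith
    have heb : 2^j + m ≤ (2*(m+1)) * 2^j := by nlinarith
    have hra : r^((2*((n:ℕ))-1) * 2^j) ≤ r^(2^j) * r^((n:ℕ)-1) := by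
      rw [← pow_add, hm]
      simpa using pow_le_pow_of_le_one h0 hr1.le hea
    have hrb : r^((2*((n:ℕ))) * 2^j) ≤ r^(2^j) * r^((n:ℕ)-1) := by
      rw [← pow_add, hm]
      simpa using pow_le_pow_of_le_one h0 hr1.le heb
    calc ‖F (j, n)‖ ≤ (2:ℝ)^j * (r^((2*(n:ℕ)-1) * 2^j) + r^((2*(n:ℕ)) * 2^j)) := by
          simp only [hF, norm_mul, norm_pow]
          gcongr
          · simp
          · exact (norm_sub_le _ _).trans (by rw [norm_pow, norm_pow, hnorm])
    _ ≤ (2:ℝ)^j * (r^(2^j) * r^((n:ℕ)-1) + r^(2^j) * r^((n:ℕ)-1)) := by gcongr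
    _ = ((2:ℝ)^j * 2 * r^(2^j)) * r^((n:ℕ)-1) := by ring
  -- assemble
  have hT : HasSum F (∑' p, F p) := hFsum.hasSum
  have hSsum : HasSum S (∑' p, F p) := hT.prod_fiberwise hfiber
  have hStel : HasSum S (G 0) := by
    rw [hSsum.summable.hasSum_iff_tendsto_nat]
    have he : (fun N => ∑ j ∈ Finset.range N, S j) = fun N => G 0 - G N := by
      funext N; exact Finset.sum_range_sub' G N
    rw [he]
    simpa using tendsto_const_nhds.sub hGtend
  have hTG : (∑' p, F p) = G 0 := hSsum.unique hStel
  have hG0 : G 0 = t / (1 - t) := by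
    simp [hG, div_eq_mul_inv]
  rw [hTG, hG0] at hT
  exact hT
end

section
/- For every real t with |t| < 1 and every q ∈ ℂ with |q| < 2, ∑_{k=0}^∞ q^k · (t^{2^k} − (q−1) t^{2^{k+1}})/(1 − t^{2^{k+1}}) = t/(1−t). -/
open Filter Finset

theorem generalized_teixeira (t : ℝ) (ht : |t| < 1) (q : ℂ) (hq : ‖q‖ < 2) :
    ∑' k : ℕ, q ^ k * ((t : ℂ) ^ (2 ^ k) - (q - 1) * (t : ℂ) ^ (2 ^ (k + 1)))
        / (1 - (t : ℂ) ^ (2 ^ (k + 1)))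
      = (t : ℂ) / (1 - (t : ℂ)) := by
  set z : ℂ := (t : ℂ) with hzdef
  have hz : ‖z‖ < 1 := by simpa [hzdef] using ht
  have hzn : ∀ n : ℕ, n ≠ 0 → (1 : ℂ) - z ^ n ≠ 0 := by
    intro n hn h
    have h1 : z ^ n = 1 := by linear_combination -h
    have h2 : ‖z ^ n‖ < 1 := by
      rw [norm_pow]
      exact pow_lt_one₀ (norm_nonneg z) hz hn
    rw [h1] at h2; simp at h2
  set f : ℕ → ℂ := fun k => q ^ k * z ^ (2 ^ k) / (1 - z ^ (2 ^ k)) with hfdef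
  have hterm : ∀ k : ℕ,
      q ^ k * (z ^ (2 ^ k) - (q - 1) * z ^ (2 ^ (k + 1))) / (1 - z ^ (2 ^ (k + 1)))
        = f k - f (k + 1) := by
    intro k
    have hsq : z ^ (2 ^ (k + 1)) = (z ^ (2 ^ k)) ^ 2 := by
      rw [← pow_mul, pow_succ]
    have h1 : (1 : ℂ) - z ^ (2 ^ k) ≠ 0 := hzn _ (by positivity)
    have h2 : (1 : ℂ) - z ^ (2 ^ (k + 1)) ≠ 0 := hzn _ (by positivity)
    rw [hsq] at h2
    simp only [hfdef, hsq]
    set w := z ^ (2 ^ k) with hw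
    field_simp
    ring
  -- summability
  set r : ℝ := ‖z‖ with hrdef
  have hr0 : 0 ≤ r := norm_nonneg z
  have hr1 : r < 1 := hz
  set g : ℕ → ℝ := fun k => ‖q‖ ^ k * r ^ (2 ^ k) with hgdef
  have hg0 : ∀ k, 0 ≤ g k := fun k => by positivity
  have htend : Tendsto (fun k : ℕ => ‖q‖ * r ^ (2 ^ k)) atTop (nhds 0) := by
    have h1 : Tendsto (fun n : ℕ => r ^ n) atTop (nhds 0) :=
      tendsto_pow_atTop_nhds_zero_of_lt_one hr0 hr1
    have h2 : Tendsto (fun k : ℕ => (2 : ℕ) ^ k) atTop atTop :=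
      tendsto_pow_atTop_atTop_of_one_lt one_lt_two
    have := (h1.comp h2).const_mul (‖q‖)
    simpa using this
  have hsg : Summable g := by
    apply summable_of_ratio_norm_eventually_le (r := 1 / 2) (by norm_num)
    filter_upwards [htend.eventually (eventually_le_nhds (by norm_num : (0 : ℝ) < 1 / 2))]
      with k hk
    have hgk : g (k + 1) = (‖q‖ * r ^ (2 ^ k)) * g k := by
      simp only [hgdef, pow_succ, pow_mul]
      ring
    rw [Real.norm_of_nonneg (hg0 _), Real.norm_of_nonneg (hg0 _), hgk]
    exact mul_le_mul_of_nonneg_right hk (hg0 k)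
  have hf : Summable f := by
    apply Summable.of_norm_bounded (hsg.mul_left ((1 - r)⁻¹))
    intro k
    have hden : 1 - r ≤ ‖1 - z ^ (2 ^ k)‖ := by
      have h1 : ‖z ^ (2 ^ k)‖ ≤ r := by
        rw [norm_pow]
        calc r ^ 2 ^ k ≤ r ^ 1 := pow_le_pow_of_le_one hr0 hr1.le (Nat.one_le_two_pow)
        _ = r := pow_one r
      calc 1 - r ≤ 1 - ‖z ^ (2 ^ k)‖ := by linarith
        _ ≤ ‖1 - z ^ (2 ^ k)‖ := by
            have := norm_sub_norm_le (1 : ℂ) (z ^ (2 ^ k))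
            simpa using this
    have hpos : (0:ℝ) < 1 - r := by linarith
    have hnum : ‖q ^ k * z ^ (2 ^ k)‖ = g k := by
      simp [hgdef, hrdef, norm_mul, norm_pow]
    rw [hfdef]
    simp only [norm_div]
    rw [hnum]
    rw [div_le_iff₀ (lt_of_lt_of_le hpos hden)]
    calc g k = (1 - r)⁻¹ * g k * (1 - r) := by field_simp
      _ ≤ (1 - r)⁻¹ * g k * ‖1 - z ^ (2 ^ k)‖ := by
          apply mul_le_mul_of_nonneg_left hden
          positivity
  have hf' : Summable (fun k => f (k + 1)) := (summable_nat_add_iff 1).2 hf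
  have hsum : Summable (fun k => f k - f (k + 1)) := hf.sub hf'
  have hpart : ∀ n : ℕ, ∑ i ∈ Finset.range n, (f i - f (i + 1)) = f 0 - f n :=
    fun n => Finset.sum_range_sub' f n
  have hlim : Tendsto (fun n => ∑ i ∈ Finset.range n, (f i - f (i + 1))) atTop (nhds (f 0)) := by
    simp only [hpart]
    have hc : Tendsto (fun _ : ℕ => f 0) atTop (nhds (f 0)) := tendsto_const_nhds
    simpa using hc.sub hf.tendsto_atTop_zero
  have htsum : ∑' k, (f k - f (k + 1)) = f 0 :=
    tendsto_nhds_unique hsum.hasSum.tendsto_sum_nat hlim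
  calc ∑' k : ℕ, q ^ k * (z ^ (2 ^ k) - (q - 1) * z ^ (2 ^ (k + 1))) / (1 - z ^ (2 ^ (k + 1)))
      = ∑' k, (f k - f (k + 1)) := by rw [tsum_congr hterm]
    _ = f 0 := htsum
    _ = z / (1 - z) := by simp [hfdef]
end

section
/- For every real s > 1 and every complex t with |t| < 2^s, ∑_{m≥1} t^{ν₂(m)} / m^s = ζ(s) · (2^s − 1)/(2^s − t). -/
open Complex

set_option maxHeartbeats 2000000 in
theorem dirichlet_series_t_valuation (s : ℝ) (hs : 1 < s) (t : ℂ)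
    (ht : ‖t‖ < (2 : ℝ) ^ s) :
    ∑' m : ℕ+, t ^ (padicValNat 2 m) / (m : ℂ) ^ (s : ℂ)
      = riemannZeta s * ((2 : ℂ) ^ (s : ℂ) - 1) / ((2 : ℂ) ^ (s : ℂ) - t) := by
  have hsre : 1 < (s : ℂ).re := by simpa using hs
  set w : ℂ := (2 : ℂ) ^ (s : ℂ) with hw
  have habsw : ‖w‖ = (2 : ℝ) ^ s := by
    rw [hw, show (2 : ℂ) = ((2 : ℝ) : ℂ) by norm_num,
      Complex.norm_cpow_eq_rpow_re_of_pos (by norm_num)]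
    simp
  have hw0 : w ≠ 0 := by
    intro h
    rw [h] at habsw
    simp at habsw
    have : (0:ℝ) < (2:ℝ) ^ s := Real.rpow_pos_of_pos (by norm_num) s
    linarith [habsw]
  have htw : ‖t / w‖ < 1 := by
    rw [norm_div]
    rw [div_lt_one (by rw [show ‖w‖ = ‖w‖ from rfl, habsw]; positivity)]
    simpa [habsw] using ht
  have hwt : w - t ≠ 0 := by
    intro h
    have : t = w := by linear_combination -h
    rw [this] at ht
    simp [← habsw] at ht
  -- cast lemma for products
  have hsplit : ∀ a b : ℕ, ((a * b : ℕ) : ℂ) ^ (s : ℂ)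
      = ((a : ℕ) : ℂ) ^ (s : ℂ) * ((b : ℕ) : ℂ) ^ (s : ℂ) := by
    intro a b
    rw [Nat.cast_mul, Complex.natCast_mul_natCast_cpow]
  have h2k : ∀ k : ℕ, (((2 ^ k : ℕ) : ℕ) : ℂ) ^ (s : ℂ) = w ^ k := by
    intro k
    induction k with
    | zero => simp
    | succ k ih =>
      rw [pow_succ, hsplit, ih, pow_succ]
      norm_num [hw]
  -- summability of the basic series
  have hg : Summable (fun n : ℕ => 1 / (n : ℂ) ^ (s : ℂ)) :=
    Complex.summable_one_div_nat_cpow.mpr hsre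
  have hge : Summable (fun k : ℕ => 1 / ((2 * k : ℕ) : ℂ) ^ (s : ℂ)) :=
    hg.comp_injective (fun a b h => by omega)
  have hgo : Summable (fun k : ℕ => 1 / ((2 * k + 1 : ℕ) : ℂ) ^ (s : ℂ)) :=
    hg.comp_injective (fun a b h => by omega)
  -- abs of c j
  have hcabs : ∀ j : ℕ, ‖(((2 * j + 1 : ℕ) : ℂ) ^ (s : ℂ))‖
      = ((2 * j + 1 : ℕ) : ℝ) ^ s := by
    intro j
    rw [show ((2 * j + 1 : ℕ) : ℂ) = (((2 * j + 1 : ℕ) : ℝ) : ℂ) by push_cast; ring,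
      Complex.norm_cpow_eq_rpow_re_of_pos (by positivity)]
    simp
  have hc0 : ∀ j : ℕ, ((2 * j + 1 : ℕ) : ℂ) ^ (s : ℂ) ≠ 0 := by
    intro j h
    have := hcabs j
    rw [h] at this
    simp at this
    have h2 : (0:ℝ) < ((2:ℝ) * j + 1) ^ s := Real.rpow_pos_of_pos (by positivity) s
    linarith
  -- the odd sum equals ζ(s) (1 - w⁻¹)
  have heven : ∀ k : ℕ, 1 / ((2 * k : ℕ) : ℂ) ^ (s : ℂ) = w⁻¹ * (1 / (k : ℂ) ^ (s : ℂ)) := by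
    intro k
    rw [hsplit 2 k]
    have : ((2 : ℕ) : ℂ) ^ (s : ℂ) = w := by norm_num [hw]
    rw [this]
    field_simp
  have hzeta : riemannZeta s = ∑' n : ℕ, 1 / (n : ℂ) ^ (s : ℂ) :=
    zeta_eq_tsum_one_div_nat_cpow hsre
  have hodd : (∑' j : ℕ, 1 / ((2 * j + 1 : ℕ) : ℂ) ^ (s : ℂ))
      = riemannZeta s * (1 - w⁻¹) := by
    have hsplit2 := tsum_even_add_odd (f := fun n : ℕ => 1 / (n : ℂ) ^ (s : ℂ)) hge hgo
    have he : (∑' k : ℕ, 1 / ((2 * k : ℕ) : ℂ) ^ (s : ℂ)) = w⁻¹ * riemannZeta s := by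
      rw [hzeta]
      calc (∑' k : ℕ, 1 / ((2 * k : ℕ) : ℂ) ^ (s : ℂ))
          = ∑' k : ℕ, w⁻¹ * (1 / (k : ℂ) ^ (s : ℂ)) := by
            exact tsum_congr heven
        _ = w⁻¹ * ∑' k : ℕ, 1 / (k : ℂ) ^ (s : ℂ) := tsum_mul_left
    have : (∑' k : ℕ, 1 / ((2 * k : ℕ) : ℂ) ^ (s : ℂ))
        + (∑' j : ℕ, 1 / ((2 * j + 1 : ℕ) : ℂ) ^ (s : ℂ)) = riemannZeta s := by
      rw [hzeta]
      simpa using hsplit2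
    rw [he] at this
    linear_combination this
  -- the equivalence ℕ × ℕ ≃ ℕ+
  have hpos : ∀ p : ℕ × ℕ, 0 < 2 ^ p.1 * (2 * p.2 + 1) := by
    intro p; positivity
  let e0 : ℕ × ℕ → ℕ+ := fun p => ⟨2 ^ p.1 * (2 * p.2 + 1), hpos p⟩
  have hval : ∀ k j : ℕ, padicValNat 2 (2 ^ k * (2 * j + 1)) = k := by
    intro k j
    rw [padicValNat.mul (by positivity) (by omega), padicValNat.prime_pow,
      padicValNat.eq_zero_of_not_dvd (by omega)]
    ring
  have hbij : Function.Bijective e0 := by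
    constructor
    · rintro ⟨k, j⟩ ⟨k', j'⟩ h
      have h' : 2 ^ k * (2 * j + 1) = 2 ^ k' * (2 * j' + 1) := congrArg (Subtype.val) h
      have hk : k = k' := by
        have := hval k j
        rw [h', hval k' j'] at this
        omega
      subst hk
      have : 2 * j + 1 = 2 * j' + 1 := by
        have h2 : (0:ℕ) < 2 ^ k := by positivity
        exact Nat.eq_of_mul_eq_mul_left h2 h'
      simp [Prod.ext_iff]
      omega
    · intro n
      set k := padicValNat 2 (n : ℕ) with hk
      have hn0 : (n : ℕ) ≠ 0 := n.pos.ne'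
      have hdvd : 2 ^ k ∣ (n : ℕ) := pow_padicValNat_dvd
      obtain ⟨m, hm⟩ := hdvd
      have hm0 : m ≠ 0 := by
        intro h; rw [h, mul_zero] at hm; exact hn0 hm
      have hmodd : ¬ 2 ∣ m := by
        intro ⟨c, hc⟩
        have : 2 ^ (k + 1) ∣ (n : ℕ) := ⟨c, by rw [hm, hc]; ring⟩
        exact pow_succ_padicValNat_not_dvd hn0 this
      have : m % 2 = 1 := by omega
      refine ⟨(k, m / 2), ?_⟩
      apply Subtype.ext
      show 2 ^ k * (2 * (m / 2) + 1) = (n : ℕ)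
      rw [show 2 * (m / 2) + 1 = m by omega]
      exact hm.symm
  let e : ℕ × ℕ ≃ ℕ+ := Equiv.ofBijective e0 hbij
  -- the main sum via the equivalence
  have hterm : ∀ p : ℕ × ℕ,
      t ^ (padicValNat 2 (e p : ℕ)) / ((e p : ℕ) : ℂ) ^ (s : ℂ)
      = (t / w) ^ p.1 * (1 / ((2 * p.2 + 1 : ℕ) : ℂ) ^ (s : ℂ)) := by
    rintro ⟨k, j⟩
    show t ^ (padicValNat 2 (2 ^ k * (2 * j + 1))) / (((2 ^ k * (2 * j + 1) : ℕ)) : ℂ) ^ (s : ℂ)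
      = (t / w) ^ k * (1 / ((2 * j + 1 : ℕ) : ℂ) ^ (s : ℂ))
    rw [hval k j, hsplit, h2k, div_pow]
    ring
  -- summability of the double series
  have ha : Summable fun k : ℕ => ‖(t / w) ^ k‖ := by
    simpa [norm_pow] using summable_geometric_of_lt_one (norm_nonneg (t / w)) htw
  have hbR : Summable fun j : ℕ => 1 / ((2 * j + 1 : ℕ) : ℝ) ^ s :=
    (Real.summable_one_div_nat_rpow.mpr hs).comp_injective (fun a b h => by omega)
  have hb : Summable fun j : ℕ => ‖1 / ((2 * j + 1 : ℕ) : ℂ) ^ (s : ℂ)‖ := by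
    refine hbR.congr fun j => ?_
    rw [norm_div, norm_one,
      show ‖((2 * j + 1 : ℕ) : ℂ) ^ (s : ℂ)‖ = ‖(((2 * j + 1 : ℕ) : ℂ) ^ (s : ℂ))‖ from rfl,
      hcabs]
  have hF : Summable (fun p : ℕ × ℕ =>
      (t / w) ^ p.1 * (1 / ((2 * p.2 + 1 : ℕ) : ℂ) ^ (s : ℂ))) :=
    summable_mul_of_summable_norm (f := fun k : ℕ => (t / w) ^ k)
      (g := fun j : ℕ => 1 / ((2 * j + 1 : ℕ) : ℂ) ^ (s : ℂ)) ha hb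
  have step1 : (∑' m : ℕ+, t ^ (padicValNat 2 m) / (m : ℂ) ^ (s : ℂ))
      = ∑' p : ℕ × ℕ, t ^ (padicValNat 2 (e p : ℕ)) / ((e p : ℕ) : ℂ) ^ (s : ℂ) :=
    (e.tsum_eq (fun m : ℕ+ => t ^ (padicValNat 2 m) / (m : ℂ) ^ (s : ℂ))).symm
  have step2 : (∑' p : ℕ × ℕ, t ^ (padicValNat 2 (e p : ℕ)) / ((e p : ℕ) : ℂ) ^ (s : ℂ))
      = ∑' p : ℕ × ℕ, (t / w) ^ p.1 * (1 / ((2 * p.2 + 1 : ℕ) : ℂ) ^ (s : ℂ)) :=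
    tsum_congr hterm
  have step3 : (∑' p : ℕ × ℕ, (t / w) ^ p.1 * (1 / ((2 * p.2 + 1 : ℕ) : ℂ) ^ (s : ℂ)))
      = ∑' (k : ℕ) (j : ℕ), (t / w) ^ k * (1 / ((2 * j + 1 : ℕ) : ℂ) ^ (s : ℂ)) :=
    Summable.tsum_prod' (f := fun p : ℕ × ℕ => (t / w) ^ p.1 * (1 / ((2 * p.2 + 1 : ℕ) : ℂ) ^ (s : ℂ)))
      hF (fun k => hgo.mul_left ((t / w) ^ k))
  have step4 : (∑' (k : ℕ) (j : ℕ), (t / w) ^ k * (1 / ((2 * j + 1 : ℕ) : ℂ) ^ (s : ℂ)))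
      = ∑' k : ℕ, (t / w) ^ k * ∑' j : ℕ, (1 / ((2 * j + 1 : ℕ) : ℂ) ^ (s : ℂ)) :=
    tsum_congr fun k => tsum_mul_left
  have step5 : (∑' k : ℕ, (t / w) ^ k * ∑' j : ℕ, (1 / ((2 * j + 1 : ℕ) : ℂ) ^ (s : ℂ)))
      = (1 - t / w)⁻¹ * (riemannZeta s * (1 - w⁻¹)) := by
    rw [hodd, tsum_mul_right, tsum_geometric_of_norm_lt_one htw]
  rw [step1, step2, step3, step4, step5]
  have h1 : (1 : ℂ) - t / w ≠ 0 := by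
    have hh : (1 - t / w) * w = w - t := by field_simp
    intro h
    apply hwt
    rw [← hh, h, zero_mul]
  field_simp
end

section
/- For every real s > 1, ∑_{m≥1} cos(π ν₂(m)/2) / m^s = ζ(s) · (4^s − 2^s)/(4^s + 1). -/
open Complex

lemma aux_cos (k : ℕ) :
    ((Real.cos (Real.pi * k / 2) : ℝ) : ℂ) = (Complex.I ^ k + (-Complex.I) ^ k) / 2 := by
  have hI : Complex.exp (((Real.pi / 2 : ℝ) : ℂ) * Complex.I) = Complex.I := by
    rw [Complex.exp_mul_I, ← Complex.ofReal_cos, ← Complex.ofReal_sin,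
      Real.cos_pi_div_two, Real.sin_pi_div_two]
    simp
  have h1 : Complex.exp (((Real.pi * k / 2 : ℝ) : ℂ) * Complex.I) = Complex.I ^ k := by
    have : ((Real.pi * k / 2 : ℝ) : ℂ) * Complex.I
        = (k : ℂ) * (((Real.pi / 2 : ℝ) : ℂ) * Complex.I) := by
      push_cast; ring
    rw [this, Complex.exp_nat_mul, hI]
  have h2 : Complex.exp (-(((Real.pi * k / 2 : ℝ) : ℂ)) * Complex.I) = (-Complex.I) ^ k := by
    rw [neg_mul, Complex.exp_neg, h1, ← inv_pow, Complex.inv_I]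
  rw [Complex.ofReal_cos, Complex.cos, h1, h2]

lemma aux_val (k j : ℕ) : padicValNat 2 (2 ^ k * (2 * j + 1)) = k := by
  haveI : Fact (Nat.Prime 2) := ⟨Nat.prime_two⟩
  rw [padicValNat.mul (pow_ne_zero _ two_ne_zero) (by omega), padicValNat.prime_pow,
    padicValNat.eq_zero_of_not_dvd (by omega), add_zero]

noncomputable def oddEquiv : ℕ × ℕ ≃ ℕ+ :=
  Equiv.ofBijective (fun p => ⟨2 ^ p.1 * (2 * p.2 + 1), by positivity⟩) (by
    constructor
    · rintro ⟨k, j⟩ ⟨k', j'⟩ h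
      have h : 2 ^ k * (2 * j + 1) = 2 ^ k' * (2 * j' + 1) := congrArg Subtype.val h
      have hk : k = k' := by
        have := aux_val k j
        rw [h, aux_val] at this
        omega
      subst hk
      have : 2 * j + 1 = 2 * j' + 1 := Nat.eq_of_mul_eq_mul_left (Nat.two_pow_pos k) h
      simp_all
    · rintro ⟨n, hn⟩
      refine ⟨⟨padicValNat 2 n, ordCompl[2] n / 2⟩, ?_⟩
      have hn0 : n ≠ 0 := hn.ne'
      have hodd : ¬ 2 ∣ ordCompl[2] n := Nat.not_dvd_ordCompl Nat.prime_two hn0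
      have hpos : 0 < ordCompl[2] n := Nat.ordCompl_pos 2 hn0
      have hoc : 2 * (ordCompl[2] n / 2) + 1 = ordCompl[2] n := by omega
      have hfac : n.factorization 2 = padicValNat 2 n :=
        Nat.factorization_def n Nat.prime_two
      have := Nat.ordProj_mul_ordCompl_eq_self n 2
      refine Subtype.ext ?_
      simp only
      rw [hoc]
      rw [hfac] at this
      exact this)

theorem dirichlet_series_cos_half_pi_valuation (s : ℝ) (hs : 1 < s) :
    ∑' m : ℕ+, (Real.cos (Real.pi * padicValNat 2 m / 2) : ℂ) / (m : ℂ) ^ (s : ℂ)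
      = riemannZeta s * ((4 : ℂ) ^ (s : ℂ) - (2 : ℂ) ^ (s : ℂ))
        / ((4 : ℂ) ^ (s : ℂ) + 1) := by
  have h20 : (0:ℝ) ≤ 2 := by norm_num
  set x : ℝ := (2:ℝ) ^ s with hxdef
  have hx1 : 1 < x := (Real.one_lt_rpow_iff_of_pos two_pos).2 (Or.inl ⟨one_lt_two, by linarith⟩)
  have hx0 : 0 < x := lt_trans one_pos hx1
  have h2c : (2:ℂ) ^ (s:ℂ) = ((x:ℝ):ℂ) := by
    rw [show ((2:ℂ)) = (((2:ℝ)):ℂ) by norm_num, ← Complex.ofReal_cpow h20 s]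
  have hpow : ∀ k : ℕ, ((2:ℝ) ^ (k:ℕ)) ^ s = x ^ k := by
    intro k
    rw [← Real.rpow_natCast 2 k, ← Real.rpow_mul h20, mul_comm, Real.rpow_mul h20,
      Real.rpow_natCast]
  have h4r : (4:ℝ) ^ s = x ^ 2 := by
    have := hpow 2
    norm_num at this
    exact this
  have h4c : (4:ℂ) ^ (s:ℂ) = ((x ^ 2 : ℝ):ℂ) := by
    rw [show ((4:ℂ)) = (((4:ℝ)):ℂ) by norm_num, ← Complex.ofReal_cpow (by norm_num) s, h4r]
  -- key quantities
  set w : ℂ := ((x⁻¹ : ℝ) : ℂ) with hwdef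
  have hwinv : w = (((x:ℝ):ℂ))⁻¹ := by push_cast [hwdef]; ring
  have hwnorm : ‖Complex.I * w‖ = x⁻¹ := by
    rw [norm_mul, Complex.norm_I, one_mul, hwdef, Complex.norm_real, Real.norm_eq_abs,
      abs_of_pos (by positivity)]
  have hxinv1 : x⁻¹ < 1 := by
    rw [inv_lt_one_iff₀]; right; exact hx1
  have hlt : ‖Complex.I * w‖ < 1 := by rw [hwnorm]; exact hxinv1
  have hltn : ‖-(Complex.I * w)‖ < 1 := by rwa [norm_neg]
  set f : ℕ → ℂ := fun n => 1 / (n:ℂ) ^ (s:ℂ) with hfdef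
  set a : ℕ → ℂ := fun k => ((Complex.I * w) ^ k + (-(Complex.I * w)) ^ k) / 2 with hadef
  set b : ℕ → ℂ := fun j => f (2 * j + 1) with hbdef
  -- norm summability
  have hfn : Summable (fun n => ‖f n‖) := by
    have heq : ∀ n : ℕ, ‖f n‖ = 1 / (n:ℝ) ^ s := by
      intro n
      rw [hfdef]
      simp only
      rw [show ((n:ℂ)) = (((n:ℝ)):ℂ) by push_cast; ring, ← Complex.ofReal_cpow n.cast_nonneg s,
        norm_div, norm_one, Complex.norm_real, Real.norm_eq_abs,
        _root_.abs_of_nonneg (Real.rpow_nonneg n.cast_nonneg s)]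
    rw [funext heq]
    exact (Real.summable_one_div_nat_rpow).2 hs
  have hna : Summable (fun k => ‖a k‖) := by
    refine Summable.of_nonneg_of_le (fun k => norm_nonneg _) (fun k => ?_)
      (summable_geometric_of_lt_one (by positivity) hxinv1)
    rw [hadef]
    simp only
    rw [norm_div]
    calc ‖(Complex.I * w) ^ k + (-(Complex.I * w)) ^ k‖ / ‖(2:ℂ)‖
        ≤ (‖(Complex.I * w) ^ k‖ + ‖(-(Complex.I * w)) ^ k‖) / ‖(2:ℂ)‖ := by
          gcongr; exact norm_add_le _ _
      _ = x⁻¹ ^ k := by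
          rw [norm_pow, norm_pow, norm_neg, hwnorm]
          simp [Complex.norm_ofNat]
  have hnb : Summable (fun j => ‖b j‖) := by
    have : Function.Injective (fun j : ℕ => 2 * j + 1) := by
      intro u v h
      dsimp at h
      omega
    exact hfn.comp_injective this
  -- pointwise identity
  have hfun : ∀ p : ℕ × ℕ,
      (Real.cos (Real.pi * padicValNat 2 (oddEquiv p) / 2) : ℂ) / ((oddEquiv p : ℕ+) : ℂ) ^ (s:ℂ)
        = a p.1 * b p.2 := by
    rintro ⟨k, j⟩
    have happ : ((oddEquiv (k, j) : ℕ+) : ℕ) = 2 ^ k * (2 * j + 1) := rfl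
    have hcoe : ((oddEquiv (k, j) : ℕ+) : ℂ) = ((2 ^ k * (2 * j + 1) : ℕ) : ℂ) := by
      norm_cast
    rw [show (padicValNat 2 (oddEquiv (k, j) : ℕ+) : ℕ) = k by rw [happ, aux_val], hcoe]
    rw [aux_cos]
    have hden : ((2 ^ k * (2 * j + 1) : ℕ) : ℂ) ^ (s:ℂ)
        = ((x ^ k : ℝ) : ℂ) * ((2 * j + 1 : ℕ) : ℂ) ^ (s:ℂ) := by
      have hc1 : ((2 ^ k * (2 * j + 1) : ℕ) : ℂ)
          = ((((2:ℝ) ^ k * ((2 * j + 1 : ℕ) : ℝ)) : ℝ) : ℂ) := by push_cast; ring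
      rw [hc1, Complex.ofReal_mul, mul_cpow_ofReal_nonneg (by positivity) (Nat.cast_nonneg _),
        ← Complex.ofReal_cpow (by positivity) s, hpow k]
      norm_cast
    rw [hden]
    have hx' : ((x ^ k : ℝ) : ℂ) ≠ 0 := by
      simp only [ne_eq, Complex.ofReal_eq_zero]
      positivity
    have hb' : ((2 * j + 1 : ℕ) : ℂ) ^ (s:ℂ) ≠ 0 := by
      rw [ne_eq, Complex.cpow_eq_zero_iff]
      push_neg
      intro h
      exfalso
      rw [Nat.cast_eq_zero] at h
      omega
    rw [hadef, hbdef, hfdef]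
    simp only
    rw [hwinv]
    push_cast
    field_simp
    ring
  -- geometric sum
  have hs1 : Summable (fun k : ℕ => (Complex.I * w) ^ k) := summable_geometric_of_norm_lt_one hlt
  have hs2 : Summable (fun k : ℕ => (-(Complex.I * w)) ^ k) := summable_geometric_of_norm_lt_one hltn
  have h1m : (1:ℂ) - Complex.I * w ≠ 0 := by
    intro h
    have h' : Complex.I * w = 1 := by linear_combination -h
    have := hwnorm
    rw [h', norm_one] at this
    linarith
  have h1p : (1:ℂ) + Complex.I * w ≠ 0 := by
    intro h
    have h' : Complex.I * w = -1 := by linear_combination h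
    have := hwnorm
    rw [h', norm_neg, norm_one] at this
    linarith
  have h1w : (1:ℂ) + w ^ 2 ≠ 0 := by
    rw [hwdef]
    have : (1:ℂ) + ((x⁻¹ : ℝ):ℂ) ^ 2 = ((1 + (x⁻¹)^2 : ℝ) : ℂ) := by push_cast; ring
    rw [this]
    exact_mod_cast (by positivity : (1 + (x⁻¹)^2 : ℝ) ≠ 0)
  have hmulw : ((1:ℂ) - Complex.I * w) * (1 + Complex.I * w) = 1 + w ^ 2 := by
    linear_combination (-(w^2)) * Complex.I_sq
  have hSa : (∑' k, a k) = (1 + w ^ 2)⁻¹ := by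
    rw [hadef]
    simp only
    rw [tsum_div_const, Summable.tsum_add hs1 hs2, tsum_geometric_of_norm_lt_one hlt,
      tsum_geometric_of_norm_lt_one hltn, sub_neg_eq_add, inv_add_inv h1m h1p, hmulw,
      show ((1:ℂ) - Complex.I * w) + (1 + Complex.I * w) = 2 by ring]
    field_simp
  -- odd zeta sum
  have hre : 1 < (s:ℂ).re := by simpa using hs
  have hzeta : riemannZeta s = ∑' n, f n := by
    rw [hfdef]
    exact zeta_eq_tsum_one_div_nat_cpow hre
  have heven : ∀ k : ℕ, f (2 * k) = w * f k := by
    intro k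
    rw [hfdef]
    simp only
    have hc : ((2 * k : ℕ) : ℂ) = (((2:ℝ)) : ℂ) * (((k:ℝ)) : ℂ) := by push_cast; ring
    rw [hc, mul_cpow_ofReal_nonneg h20 k.cast_nonneg, ← Complex.ofReal_cpow h20 s, ← hxdef,
      hwinv]
    push_cast
    rw [one_div, one_div, mul_inv]
  have hfsum : Summable f := hfn.of_norm
  have hesum : Summable (fun k => f (2 * k)) :=
    (hfsum.mul_left w).congr (fun k => (heven k).symm)
  have hosum : Summable b := hnb.of_norm
  have hsplit := tsum_even_add_odd hesum hosum
  have he' : (∑' k, f (2 * k)) = w * riemannZeta s := by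
    rw [tsum_congr heven, tsum_mul_left, ← hzeta]
  have hSb : (∑' j, b j) = riemannZeta s * (1 - w) := by
    rw [hbdef]
    rw [he', ← hzeta] at hsplit
    linear_combination hsplit
  -- put it together
  rw [← Equiv.tsum_eq oddEquiv, tsum_congr hfun, ← tsum_mul_tsum_of_summable_norm hna hnb,
    hSa, hSb, h2c, h4c]
  have hX : ((x:ℝ):ℂ) ≠ 0 := by exact_mod_cast hx0.ne'
  have hd1 : ((x ^ 2 : ℝ):ℂ) + 1 ≠ 0 := by
    have : ((x ^ 2 : ℝ):ℂ) + 1 = ((x^2 + 1 : ℝ) : ℂ) := by push_cast; ring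
    rw [this]
    exact_mod_cast (by positivity : (x^2 + 1 : ℝ) ≠ 0)
  rw [hwinv]
  push_cast
  push_cast at hd1 h1w
  rw [hwinv] at h1w
  field_simp
end

section
/- For every real s > 1 and real x, ∑_{m≥1} cos(2π x ν₂(m)) / m^s = ζ(s) · ((2^s − 1)/2^{s+1}) · (cos(2πx) − 2^s)/(cos(2πx) − (2^s + 2^{−s})/2). -/
open Complex

namespace DirichletCosValuation

lemma padic_val (k j : ℕ) : padicValNat 2 (2 ^ k * (2 * j + 1)) = k := by
  rw [padicValNat.mul (by positivity) (by omega), padicValNat.prime_pow,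
    padicValNat.eq_zero_of_not_dvd (by omega), add_zero]

/-- The bijection `(k, j) ↦ 2^k * (2j+1)` from `ℕ × ℕ` to `ℕ+`. -/
def e2 : ℕ × ℕ ≃ ℕ+ where
  toFun p := ⟨2 ^ p.1 * (2 * p.2 + 1), by positivity⟩
  invFun m := (padicValNat 2 m, ((m : ℕ) / 2 ^ padicValNat 2 (m : ℕ) - 1) / 2)
  left_inv p := by
    obtain ⟨k, j⟩ := p
    have h1 : padicValNat 2 (2 ^ k * (2 * j + 1)) = k := padic_val k j
    simp only [PNat.mk_coe] at *
    ext
    · exact h1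
    · show (2 ^ k * (2 * j + 1) / 2 ^ padicValNat 2 (2 ^ k * (2 * j + 1)) - 1) / 2 = j
      rw [h1, Nat.mul_div_cancel_left _ (Nat.pow_pos (n := k) (by norm_num))]
      omega
  right_inv m := by
    have hm : (m : ℕ) ≠ 0 := m.ne_zero
    set k := padicValNat 2 (m : ℕ) with hk
    have hdvd : 2 ^ k ∣ (m : ℕ) := pow_padicValNat_dvd
    have hfac : (m : ℕ).factorization 2 = k := Nat.factorization_def _ Nat.prime_two
    have hodd : ¬ 2 ∣ ((m : ℕ) / 2 ^ k) := by
      have := Nat.not_dvd_ordCompl Nat.prime_two hm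
      rwa [hfac] at this
    have ho : (m : ℕ) / 2 ^ k % 2 = 1 := Nat.two_dvd_ne_zero.mp hodd
    apply Subtype.ext
    show 2 ^ k * (2 * (((m : ℕ) / 2 ^ k - 1) / 2) + 1) = (m : ℕ)
    have key : ∀ o : ℕ, o % 2 = 1 → 2 * ((o - 1) / 2) + 1 = o := fun o h => by omega
    rw [key _ ho, Nat.mul_div_cancel' hdvd]

lemma e2_apply (p : ℕ × ℕ) : ((e2 p : ℕ+) : ℕ) = 2 ^ p.1 * (2 * p.2 + 1) := rfl

lemma nat_mul_cpow (a b : ℕ) (s : ℂ) :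
    ((a * b : ℕ) : ℂ) ^ s = ((a : ℕ) : ℂ) ^ s * ((b : ℕ) : ℂ) ^ s := by
  have h : ((a * b : ℕ) : ℂ) = ((a : ℝ) : ℂ) * ((b : ℝ) : ℂ) := by push_cast; ring
  rw [h, mul_cpow_ofReal_nonneg a.cast_nonneg b.cast_nonneg]
  norm_cast

lemma two_pow_cpow (k : ℕ) (s : ℂ) :
    ((2 ^ k : ℕ) : ℂ) ^ s = ((2 : ℂ) ^ s) ^ k := by
  induction k with
  | zero => simp
  | succ k ih =>
    have h : (2 ^ (k + 1) : ℕ) = 2 * 2 ^ k := by ring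
    rw [h, nat_mul_cpow, ih, pow_succ]
    norm_num
    ring

lemma two_cpow_ne_zero (s : ℂ) : (2 : ℂ) ^ s ≠ 0 := by
  simp [Complex.cpow_eq_zero_iff]

lemma norm_r {s : ℝ} (hs : 0 < s) : ‖(2 : ℂ) ^ (-(s : ℂ))‖ < 1 := by
  have h2 : (2 : ℂ) = ((2 : ℝ) : ℂ) := by norm_num
  rw [h2, norm_cpow_eq_rpow_re_of_pos two_pos]
  simp only [neg_re, ofReal_re]
  exact Real.rpow_lt_one_of_one_lt_of_neg one_lt_two (by linarith)

lemma summable_odd (s : ℝ) (hs : 1 < s) :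
    Summable fun j : ℕ => ‖1 / ((2 * j + 1 : ℕ) : ℂ) ^ (s : ℂ)‖ := by
  have hnorm : ∀ j : ℕ, ‖1 / ((2 * j + 1 : ℕ) : ℂ) ^ (s : ℂ)‖
      = 1 / ((2 * j + 1 : ℕ) : ℝ) ^ s := by
    intro j
    rw [norm_div, norm_one, norm_natCast_cpow_of_pos (by omega)]
    simp
  simp only [hnorm]
  have hbase : Summable fun j : ℕ => 1 / ((j + 1 : ℕ) : ℝ) ^ s := by
    have := (Real.summable_one_div_nat_rpow (p := s)).mpr hs
    exact (summable_nat_add_iff 1).mpr this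
  refine Summable.of_nonneg_of_le (fun j => by positivity) (fun j => ?_) hbase
  apply one_div_le_one_div_of_le
  · positivity
  · apply Real.rpow_le_rpow (by positivity) _ (by linarith)
    push_cast; linarith

lemma F_eq (s : ℝ) (hs : 1 < s) (z : ℂ) (hz : ‖z‖ = 1) :
    ∑' m : ℕ+, z ^ padicValNat 2 (m : ℕ) / ((m : ℕ) : ℂ) ^ (s : ℂ)
      = (1 - z * (2 : ℂ) ^ (-(s : ℂ)))⁻¹ * ∑' j : ℕ, 1 / ((2 * j + 1 : ℕ) : ℂ) ^ (s : ℂ) := by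
  have hrn : ‖z * (2 : ℂ) ^ (-(s : ℂ))‖ < 1 := by
    rw [norm_mul, hz, one_mul]; exact norm_r (by linarith)
  have hgeo : Summable fun k : ℕ => ‖(z * (2 : ℂ) ^ (-(s : ℂ))) ^ k‖ := by
    simp only [norm_pow]
    exact summable_geometric_of_lt_one (norm_nonneg _) hrn
  have key : ∀ p : ℕ × ℕ,
      z ^ padicValNat 2 ((e2 p : ℕ+) : ℕ) / (((e2 p : ℕ+) : ℕ) : ℂ) ^ (s : ℂ)
        = (z * (2 : ℂ) ^ (-(s : ℂ))) ^ p.1 * (1 / ((2 * p.2 + 1 : ℕ) : ℂ) ^ (s : ℂ)) := by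
    rintro ⟨k, j⟩
    rw [e2_apply]
    show z ^ padicValNat 2 (2 ^ k * (2 * j + 1)) / ((2 ^ k * (2 * j + 1) : ℕ) : ℂ) ^ (s : ℂ) = _
    rw [padic_val, nat_mul_cpow, two_pow_cpow, cpow_neg, mul_pow, inv_pow]
    have h1 : ((2 : ℂ) ^ (s : ℂ)) ^ k ≠ 0 := pow_ne_zero _ (two_cpow_ne_zero _)
    have h2 : ((2 * j + 1 : ℕ) : ℂ) ^ (s : ℂ) ≠ 0 := by
      have := norm_natCast_cpow_pos_of_pos (n := 2 * j + 1) (by omega) (s : ℂ)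
      intro h; rw [h] at this; simp at this
    field_simp
  calc ∑' m : ℕ+, z ^ padicValNat 2 (m : ℕ) / ((m : ℕ) : ℂ) ^ (s : ℂ)
      = ∑' p : ℕ × ℕ, z ^ padicValNat 2 ((e2 p : ℕ+) : ℕ) / (((e2 p : ℕ+) : ℕ) : ℂ) ^ (s : ℂ) :=
        (Equiv.tsum_eq e2 _).symm
    _ = ∑' p : ℕ × ℕ, (z * (2 : ℂ) ^ (-(s : ℂ))) ^ p.1 * (1 / ((2 * p.2 + 1 : ℕ) : ℂ) ^ (s : ℂ)) :=
        tsum_congr key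
    _ = (∑' k : ℕ, (z * (2 : ℂ) ^ (-(s : ℂ))) ^ k) * ∑' j : ℕ, 1 / ((2 * j + 1 : ℕ) : ℂ) ^ (s : ℂ) :=
        (tsum_mul_tsum_of_summable_norm hgeo (summable_odd s hs)).symm
    _ = (1 - z * (2 : ℂ) ^ (-(s : ℂ)))⁻¹ * ∑' j : ℕ, 1 / ((2 * j + 1 : ℕ) : ℂ) ^ (s : ℂ) := by
        rw [tsum_geometric_of_norm_lt_one hrn]

lemma pnat_zeta (s : ℝ) (hs : 1 < s) :
    ∑' m : ℕ+, 1 / ((m : ℕ) : ℂ) ^ (s : ℂ) = riemannZeta s := by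
  rw [zeta_eq_tsum_one_div_nat_cpow (by simpa using hs)]
  refine Function.Injective.tsum_eq (f := fun n : ℕ => 1 / (n : ℂ) ^ (s : ℂ))
    (fun a b h => PNat.coe_injective h) (fun x hx => ?_)
  rcases Nat.eq_zero_or_pos x with h0 | h0
  · subst h0
    have hz : (fun n : ℕ => 1 / (n : ℂ) ^ (s : ℂ)) 0 = 0 := by
      simp only [Nat.cast_zero]
      rw [Complex.zero_cpow (by
        intro h; rw [Complex.ofReal_eq_zero] at h; linarith), div_zero]
    exact absurd hz hx
  · exact ⟨⟨x, h0⟩, rfl⟩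

lemma odd_sum (s : ℝ) (hs : 1 < s) :
    ∑' j : ℕ, 1 / ((2 * j + 1 : ℕ) : ℂ) ^ (s : ℂ)
      = riemannZeta s * (1 - (2 : ℂ) ^ (-(s : ℂ))) := by
  have h1 := F_eq s hs 1 (by simp)
  simp only [one_pow] at h1
  rw [pnat_zeta s hs, one_mul] at h1
  have hne : 1 - (2 : ℂ) ^ (-(s : ℂ)) ≠ 0 := by
    intro h
    have h2 : (2 : ℂ) ^ (-(s : ℂ)) = 1 := by linear_combination -h
    have := norm_r (by linarith : (0 : ℝ) < s)
    rw [h2] at this; simp at this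
  rw [h1]
  field_simp

lemma F_summable (s : ℝ) (hs : 1 < s) (z : ℂ) (hz : ‖z‖ = 1) :
    Summable fun m : ℕ+ => z ^ padicValNat 2 (m : ℕ) / ((m : ℕ) : ℂ) ^ (s : ℂ) := by
  apply Summable.of_norm
  have hb : Summable fun m : ℕ+ => 1 / ((m : ℕ) : ℝ) ^ s := by
    have h := (Real.summable_one_div_nat_rpow (p := s)).mpr hs
    exact h.comp_injective PNat.coe_injective
  refine Summable.of_nonneg_of_le (fun m => norm_nonneg _) (fun m => ?_) hb
  rw [norm_div, norm_pow, hz, one_pow, norm_natCast_cpow_of_pos m.pos]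
  simp

lemma alg (ζ z p : ℂ) (hz0 : z ≠ 0) (hp0 : p ≠ 0) (hA : p - z ≠ 0) (hB : z * p - 1 ≠ 0) :
    (1 - z * p⁻¹)⁻¹ * (ζ * (1 - p⁻¹)) / 2 + (1 - z⁻¹ * p⁻¹)⁻¹ * (ζ * (1 - p⁻¹)) / 2
      = ζ * ((p - 1) / (p * 2)) * ((z + z⁻¹) / 2 - p) / ((z + z⁻¹) / 2 - (p + p⁻¹) / 2) := by
  have e1 : 1 - z * p⁻¹ = (p - z) / p := by field_simp
  have e2 : 1 - z⁻¹ * p⁻¹ = (z * p - 1) / (z * p) := by field_simp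
  have e3 : (z + z⁻¹) / 2 - (p + p⁻¹) / 2 = -((p - z) * (z * p - 1)) / (2 * z * p) := by
    field_simp; ring
  have e4 : (z + z⁻¹) / 2 - p = (z ^ 2 + 1 - 2 * p * z) / (2 * z) := by
    field_simp
  have e5 : 1 - p⁻¹ = (p - 1) / p := by field_simp
  rw [e1, e2, e3, e4, e5, inv_div, inv_div]
  have hC : p * z - 1 ≠ 0 := by rw [mul_comm]; exact hB
  have hD : z - p ≠ 0 := fun h => hA (by linear_combination -h)
  field_simp
  ring

end DirichletCosValuation

open DirichletCosValuation in
theorem dirichlet_series_cos_valuation (s : ℝ) (hs : 1 < s) (x : ℝ) :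
    ∑' m : ℕ+, (Real.cos (2 * Real.pi * x * padicValNat 2 m) : ℂ) / (m : ℂ) ^ (s : ℂ)
      = riemannZeta s * (((2 : ℂ) ^ (s : ℂ) - 1) / (2 : ℂ) ^ ((s : ℂ) + 1))
        * ((Real.cos (2 * Real.pi * x) : ℂ) - (2 : ℂ) ^ (s : ℂ))
        / ((Real.cos (2 * Real.pi * x) : ℂ)
            - ((2 : ℂ) ^ (s : ℂ) + (2 : ℂ) ^ (-(s : ℂ))) / 2) := by
  set t : ℝ := 2 * Real.pi * x with ht
  set z : ℂ := Complex.exp (t * I) with hzdef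
  set w : ℂ := Complex.exp (-(t : ℂ) * I) with hwdef
  have hz1 : ‖z‖ = 1 := by
    rw [hzdef, Complex.norm_exp]
    simp
  have hw1 : ‖w‖ = 1 := by
    rw [hwdef, Complex.norm_exp]
    simp
  have hzw : z * w = 1 := by
    rw [hzdef, hwdef, ← Complex.exp_add]
    ring_nf
    exact Complex.exp_zero
  have cos_term : ∀ k : ℕ, ((Real.cos (t * k) : ℝ) : ℂ) = (z ^ k + w ^ k) / 2 := by
    intro k
    rw [Complex.ofReal_cos]
    have h2c := Complex.two_cos ((k : ℂ) * (t : ℂ))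
    rw [show ((k : ℂ) * (t : ℂ)) * I = (k : ℕ) * ((t : ℂ) * I) by push_cast; ring] at h2c
    rw [show -((k : ℂ) * (t : ℂ)) * I = (k : ℕ) * (-(t : ℂ) * I) by push_cast; ring] at h2c
    rw [Complex.exp_nat_mul, Complex.exp_nat_mul, ← hzdef, ← hwdef] at h2c
    have harg : ((t * k : ℝ) : ℂ) = (k : ℂ) * (t : ℂ) := by push_cast; ring
    rw [harg]
    linear_combination h2c / 2
  have hc : ((Real.cos t : ℝ) : ℂ) = (z + w) / 2 := by
    have := cos_term 1
    simpa using this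
  have hsz := F_summable s hs z hz1
  have hsw := F_summable s hs w hw1
  have split : ∀ m : ℕ+,
      ((Real.cos (t * padicValNat 2 (m : ℕ)) : ℝ) : ℂ) / ((m : ℕ) : ℂ) ^ (s : ℂ)
        = z ^ padicValNat 2 (m : ℕ) / ((m : ℕ) : ℂ) ^ (s : ℂ) / 2
          + w ^ padicValNat 2 (m : ℕ) / ((m : ℕ) : ℂ) ^ (s : ℂ) / 2 := by
    intro m
    rw [cos_term]
    ring
  calc ∑' m : ℕ+, ((Real.cos (t * padicValNat 2 (m : ℕ)) : ℝ) : ℂ) / ((m : ℕ) : ℂ) ^ (s : ℂ)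
      = ∑' m : ℕ+, (z ^ padicValNat 2 (m : ℕ) / ((m : ℕ) : ℂ) ^ (s : ℂ) / 2
          + w ^ padicValNat 2 (m : ℕ) / ((m : ℕ) : ℂ) ^ (s : ℂ) / 2) := tsum_congr split
    _ = (∑' m : ℕ+, z ^ padicValNat 2 (m : ℕ) / ((m : ℕ) : ℂ) ^ (s : ℂ)) / 2
        + (∑' m : ℕ+, w ^ padicValNat 2 (m : ℕ) / ((m : ℕ) : ℂ) ^ (s : ℂ)) / 2 := by
        rw [Summable.tsum_add (hsz.div_const 2) (hsw.div_const 2), tsum_div_const, tsum_div_const]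
    _ = riemannZeta s * (((2 : ℂ) ^ (s : ℂ) - 1) / (2 : ℂ) ^ ((s : ℂ) + 1))
        * ((Real.cos t : ℝ) - (2 : ℂ) ^ (s : ℂ))
        / ((Real.cos t : ℝ) - ((2 : ℂ) ^ (s : ℂ) + (2 : ℂ) ^ (-(s : ℂ))) / 2) := by
        rw [F_eq s hs z hz1, F_eq s hs w hw1, odd_sum s hs]
        set p : ℂ := (2 : ℂ) ^ (s : ℂ) with hpdef
        have hp0 : p ≠ 0 := two_cpow_ne_zero _
        have hrdef : (2 : ℂ) ^ (-(s : ℂ)) = p⁻¹ := by rw [hpdef, Complex.cpow_neg]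
        have h2s1 : (2 : ℂ) ^ ((s : ℂ) + 1) = p * 2 := by
          rw [Complex.cpow_add _ _ (two_ne_zero), Complex.cpow_one, hpdef]
        have hz0 : z ≠ 0 := Complex.exp_ne_zero _
        have hw' : w = z⁻¹ := by
          field_simp
          linear_combination hzw
        have hrnorm : ‖(2 : ℂ) ^ (-(s : ℂ))‖ < 1 := norm_r (by linarith)
        have hne1 : 1 - z * (2 : ℂ) ^ (-(s : ℂ)) ≠ 0 := by
          intro h
          have h2 : z * (2 : ℂ) ^ (-(s : ℂ)) = 1 := by linear_combination -h
          have : ‖z * (2 : ℂ) ^ (-(s : ℂ))‖ < 1 := by rw [norm_mul, hz1, one_mul]; exact hrnorm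
          rw [h2] at this; simp at this
        have hne2 : 1 - w * (2 : ℂ) ^ (-(s : ℂ)) ≠ 0 := by
          intro h
          have h2 : w * (2 : ℂ) ^ (-(s : ℂ)) = 1 := by linear_combination -h
          have : ‖w * (2 : ℂ) ^ (-(s : ℂ))‖ < 1 := by rw [norm_mul, hw1, one_mul]; exact hrnorm
          rw [h2] at this; simp at this
        rw [hrdef] at hne1 hne2 ⊢
        rw [h2s1, hc, hw']
        rw [hw'] at hne2
        have hA : p - z ≠ 0 := by
          intro h
          apply hne1
          have hzp : z = p := by linear_combination -h
          rw [hzp, mul_inv_cancel₀ hp0, sub_self]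
        have hB : z * p - 1 ≠ 0 := by
          intro h
          apply hne2
          have hzp : z * p = 1 := by linear_combination h
          rw [← mul_inv, hzp, inv_one, sub_self]
        exact alg (riemannZeta s) z p hz0 hp0 hA hB
end

section
/- ∑_{m≥1} cos(π ν₂(2m)/3) / m = (ln 2)/3. -/
open Filter Finset Real Topology

noncomputable def Hh : ℕ → ℝ := fun M => ∑ k ∈ range M, 1 / (k + 1)

lemma innerSumAux (j : ℕ) (N : ℕ) :
    ∑ m ∈ range N, (if 2 ^ j ∣ m + 1 then (1 : ℝ) / (m + 1) else 0)
      = Hh (N / 2 ^ j) / 2 ^ j := by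
  induction N with
  | zero => simp [Hh]
  | succ N ih =>
    rw [Finset.sum_range_succ, ih, Nat.succ_div]
    by_cases h : 2 ^ j ∣ N + 1
    · have hd : (N + 1) / 2 ^ j = N / 2 ^ j + 1 := by rw [Nat.succ_div, if_pos h]
      have hq : 2 ^ j * (N / 2 ^ j + 1) = N + 1 := by rw [← hd, Nat.mul_div_cancel' h]
      have hqr : (N + 1 : ℝ) = (2 : ℝ) ^ j * ((N / 2 ^ j : ℕ) + 1) := by
        exact_mod_cast congrArg (Nat.cast : ℕ → ℝ) hq.symm
      rw [if_pos h, if_pos h]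
      simp only [Hh, Finset.sum_range_succ]
      rw [hqr]
      have h2 : (2 : ℝ) ^ j ≠ 0 := by positivity
      have h3 : ((N / 2 ^ j : ℕ) : ℝ) + 1 ≠ 0 := by positivity
      field_simp
    · rw [if_neg h, if_neg h]; ring

noncomputable def tt : ℕ → ℝ := fun j =>
  if j = 0 then 1/2 else
    match j % 6 with
    | 0 => -1/2 | 1 => -1 | 2 => -1/2 | 3 => 1/2 | 4 => 1 | _ => 1/2

lemma swap_sum (N L : ℕ) (hL : N < 2 ^ L) :
    ∑ m ∈ range N, (∑ j ∈ range (padicValNat 2 (m + 1) + 1), tt j) / (m + 1)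
      = ∑ j ∈ range L, tt j / 2 ^ j * Hh (N / 2 ^ j) := by
  have step1 : ∀ m ∈ range N,
      (∑ j ∈ range (padicValNat 2 (m + 1) + 1), tt j) / (m + 1)
        = ∑ j ∈ range L, (if 2 ^ j ∣ m + 1 then tt j / (m + 1 : ℝ) else 0) := by
    intro m hm
    rw [Finset.mem_range] at hm
    have hne : m + 1 ≠ 0 := by omega
    have hfil : (range L).filter (fun j => 2 ^ j ∣ m + 1)
        = range (padicValNat 2 (m + 1) + 1) := by
      ext j
      simp only [Finset.mem_filter, Finset.mem_range]
      constructor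
      · rintro ⟨-, hdvd⟩
        have := (padicValNat_dvd_iff_le hne).mp hdvd
        omega
      · intro hj
        have hdvd : 2 ^ j ∣ m + 1 := (padicValNat_dvd_iff_le hne).mpr (by omega)
        refine ⟨?_, hdvd⟩
        have h1 : 2 ^ j ≤ m + 1 := Nat.le_of_dvd (by omega) hdvd
        have h2 : 2 ^ j < 2 ^ L := by omega
        exact (Nat.pow_lt_pow_iff_right one_lt_two).mp h2
    rw [← Finset.sum_filter, hfil, Finset.sum_div]
  rw [Finset.sum_congr rfl step1, Finset.sum_comm]
  refine Finset.sum_congr rfl fun j _ => ?_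
  have : ∀ m : ℕ, (if 2 ^ j ∣ m + 1 then tt j / (m + 1 : ℝ) else 0)
      = tt j * (if 2 ^ j ∣ m + 1 then 1 / ((m : ℝ) + 1) else 0) := by
    intro m; split <;> ring
  simp only [this]
  rw [← Finset.mul_sum, innerSumAux]
  ring

noncomputable def Pp : ℕ → ℝ := fun K => ∑ j ∈ range K, tt j / 2 ^ j

noncomputable def ww : ℕ → ℝ := fun r =>
  if r = 0 then 1 else if r = 1 then 1 else if r = 3 then -1 else if r = 4 then -1 else 0

lemma Pp_closed (K : ℕ) : Pp (K + 1) = ww ((K + 1) % 6) / 2 ^ (K + 1) := by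
  induction K with
  | zero => norm_num [Pp, tt, ww]
  | succ K ih =>
    have hP : Pp (K + 2) = Pp (K + 1) + tt (K + 1) / 2 ^ (K + 1) := by
      rw [Pp, Finset.sum_range_succ, ← Pp]
    rw [hP, ih]
    have hne : K + 1 ≠ 0 := by omega
    have h2 : (2 : ℝ) ^ K ≠ 0 := by positivity
    have h6 : (K+1) % 6 = 0 ∨ (K+1) % 6 = 1 ∨ (K+1) % 6 = 2 ∨ (K+1) % 6 = 3 ∨
        (K+1) % 6 = 4 ∨ (K+1) % 6 = 5 := by omega
    rcases h6 with h|h|h|h|h|h <;>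
      rw [show (K+2) % 6 = ((K+1) % 6 + 1) % 6 by omega] <;>
      simp only [tt, if_neg hne, h] <;> norm_num [ww, pow_succ] <;> field_simp <;> ring

lemma ww_abs (r : ℕ) : |ww r| ≤ 1 := by
  unfold ww; split_ifs <;> norm_num

lemma Pp_abs (K : ℕ) : |Pp (K + 1)| ≤ 1 / 2 ^ (K + 1) := by
  rw [Pp_closed, abs_div, abs_of_pos (show (0:ℝ) < 2 ^ (K+1) by positivity)]
  gcongr
  exact ww_abs _

lemma abel_aux (h : ℕ → ℝ) (L : ℕ) :
    ∑ j ∈ range L, tt j / 2 ^ j * h j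
      = (∑ j ∈ range L, Pp (j + 1) * (h j - h (j + 1))) + Pp L * h L := by
  induction L with
  | zero => simp [Pp]
  | succ L ih =>
    rw [Finset.sum_range_succ, ih, Finset.sum_range_succ]
    have hP : Pp (L + 1) = Pp L + tt L / 2 ^ L := by rw [Pp, Finset.sum_range_succ, ← Pp]
    rw [hP]; ring

noncomputable def gg : ℕ → ℕ → ℝ := fun N j =>
  Pp (j + 1) * (Hh (N / 2 ^ j) - Hh (N / 2 ^ (j + 1)))

lemma gg_eq_zero {N j : ℕ} (h : N < 2 ^ j) : gg N j = 0 := by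
  have h1 : N / 2 ^ j = 0 := Nat.div_eq_of_lt h
  have h2 : N / 2 ^ (j + 1) = 0 := Nat.div_eq_of_lt (h.trans_le (Nat.pow_le_pow_right (by norm_num) (by omega)))
  simp [gg, h1, h2, Hh]

lemma main_identity (N : ℕ) :
    ∑ m ∈ range N, (∑ j ∈ range (padicValNat 2 (m + 1) + 1), tt j) / (m + 1)
      = ∑' j, gg N j := by
  have hL : N < 2 ^ (N + 1) := (Nat.lt_two_pow_self (n := N)).trans (Nat.pow_lt_pow_right one_lt_two (by omega))
  rw [swap_sum N (N + 1) hL, abel_aux (fun j => Hh (N / 2 ^ j)) (N + 1)]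
  have h0 : Hh (N / 2 ^ (N + 1)) = 0 := by
    rw [Nat.div_eq_of_lt hL]; simp [Hh]
  rw [h0, mul_zero, add_zero]
  rw [tsum_eq_sum (s := range (N + 1)) ?_]
  · rfl
  · intro j hj
    rw [Finset.mem_range] at hj
    exact gg_eq_zero (hL.trans_le (Nat.pow_le_pow_right (by norm_num) (by omega)))

lemma Hh_sub_nonneg (M : ℕ) : 0 ≤ Hh M - Hh (M / 2) := by
  have : Hh (M / 2) ≤ Hh M := by
    apply Finset.sum_le_sum_of_subset_of_nonneg
    · exact Finset.range_subset_range.mpr (Nat.div_le_self M 2)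
    · intro k _ _; positivity
  linarith

lemma Hh_sub_le_one (M : ℕ) : Hh M - Hh (M / 2) ≤ 1 := by
  have hsub : Hh M - Hh (M / 2) = ∑ k ∈ Finset.Ico (M / 2) M, 1 / ((k : ℝ) + 1) := by
    rw [Finset.sum_Ico_eq_sub _ (Nat.div_le_self M 2)]; rfl
  rw [hsub]
  have hb : ∀ k ∈ Finset.Ico (M / 2) M, 1 / ((k : ℝ) + 1) ≤ 1 / ((M / 2 : ℕ) + 1) := by
    intro k hk
    rw [Finset.mem_Ico] at hk
    have : ((M / 2 : ℕ) : ℝ) + 1 ≤ (k : ℝ) + 1 := by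
      have := hk.1; push_cast; exact_mod_cast by omega
    apply one_div_le_one_div_of_le (by positivity) this
  calc ∑ k ∈ Finset.Ico (M / 2) M, 1 / ((k : ℝ) + 1)
      ≤ (Finset.Ico (M / 2) M).card • (1 / ((M / 2 : ℕ) + 1) : ℝ) :=
        Finset.sum_le_card_nsmul _ _ _ hb
    _ = ((M - M / 2 : ℕ) : ℝ) * (1 / ((M / 2 : ℕ) + 1)) := by
        rw [Nat.card_Ico, nsmul_eq_mul]
    _ ≤ 1 := by
        rw [mul_one_div, div_le_one (by positivity)]
        have h1 : (M - M / 2 : ℕ) ≤ M / 2 + 1 := by omega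
        exact_mod_cast by exact_mod_cast Nat.cast_le.mpr h1 |>.trans (by push_cast; linarith)

lemma tendsto_div_pow (j : ℕ) : Tendsto (fun N : ℕ => N / 2 ^ j) atTop atTop := by
  apply tendsto_atTop_atTop.2
  intro b
  refine ⟨b * 2 ^ j, fun N hN => ?_⟩
  exact (Nat.le_div_iff_mul_le (Nat.pow_pos (n := j) (by norm_num))).mpr hN

lemma Hh_eq (M : ℕ) : Hh M = ((harmonic M : ℚ) : ℝ) := by
  unfold Hh harmonic
  push_cast
  simp [one_div]

lemma tendsto_ratio : Tendsto (fun M : ℕ => (M : ℝ) / ((M / 2 : ℕ) : ℝ)) atTop (𝓝 2) := by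
  rw [← tendsto_sub_nhds_zero_iff]
  apply squeeze_zero_norm' (a := fun M : ℕ => 1 / ((M / 2 : ℕ) : ℝ))
  · filter_upwards [eventually_ge_atTop 2] with M hM
    have hc : 1 ≤ M / 2 := by omega
    have hcR : (1 : ℝ) ≤ ((M / 2 : ℕ) : ℝ) := by exact_mod_cast hc
    have h1 : 2 * (M / 2) ≤ M := by omega
    have h2 : M ≤ 2 * (M / 2) + 1 := by omega
    have h1R : 2 * ((M / 2 : ℕ) : ℝ) ≤ (M : ℝ) := by exact_mod_cast h1
    have h2R : (M : ℝ) ≤ 2 * ((M / 2 : ℕ) : ℝ) + 1 := by exact_mod_cast h2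
    have hcpos : (0 : ℝ) < ((M / 2 : ℕ) : ℝ) := by linarith
    have key : (M : ℝ) / ((M / 2 : ℕ) : ℝ) - 2 = ((M : ℝ) - 2 * ((M / 2 : ℕ) : ℝ)) / ((M / 2 : ℕ) : ℝ) := by
      field_simp
    rw [key, Real.norm_eq_abs, abs_of_nonneg (div_nonneg (by linarith) hcpos.le)]
    gcongr
    linarith
  · exact tendsto_one_div_atTop_nhds_zero_nat.comp (tendsto_div_pow 1 |>.congr (by simp [pow_one]))

lemma tendsto_log_ratio :
    Tendsto (fun M : ℕ => Real.log M - Real.log ((M / 2 : ℕ) : ℝ)) atTop (𝓝 (Real.log 2)) := by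
  have h := (Real.continuousAt_log (by norm_num : (2:ℝ) ≠ 0)).tendsto.comp tendsto_ratio
  apply h.congr'
  filter_upwards [eventually_ge_atTop 2] with M hM
  have h1 : (M : ℝ) ≠ 0 := by positivity
  have h2 : ((M / 2 : ℕ) : ℝ) ≠ 0 := by
    have : 1 ≤ M / 2 := by omega
    exact_mod_cast by positivity
  simp only [Function.comp_apply]
  rw [Real.log_div h1 h2]

lemma tendsto_Hh_sub : Tendsto (fun M : ℕ => Hh M - Hh (M / 2)) atTop (𝓝 (Real.log 2)) := by
  have A1 : Tendsto (fun M : ℕ => Hh M - Real.log M) atTop (𝓝 Real.eulerMascheroniConstant) := by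
    apply Real.tendsto_harmonic_sub_log.congr
    intro n; rw [Hh_eq]
  have A2 : Tendsto (fun M : ℕ => Hh (M / 2) - Real.log ((M / 2 : ℕ) : ℝ)) atTop
      (𝓝 Real.eulerMascheroniConstant) :=
    A1.comp (tendsto_div_pow 1 |>.congr (by simp [pow_one]))
  have := (A1.sub A2).add tendsto_log_ratio
  convert this using 2 with M
  · ring
  · ring

lemma gg_tendsto (j : ℕ) :
    Tendsto (fun N : ℕ => gg N j) atTop (𝓝 (Pp (j + 1) * Real.log 2)) := by
  have hdd : ∀ N : ℕ, N / 2 ^ (j + 1) = (N / 2 ^ j) / 2 := by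
    intro N; rw [Nat.div_div_eq_div_mul, ← pow_succ]
  have : Tendsto (fun N : ℕ => Hh (N / 2 ^ j) - Hh ((N / 2 ^ j) / 2)) atTop (𝓝 (Real.log 2)) :=
    tendsto_Hh_sub.comp (tendsto_div_pow j)
  have := this.const_mul (Pp (j + 1))
  apply this.congr
  intro N
  simp only [gg, hdd N]

lemma gg_bound (N j : ℕ) : ‖gg N j‖ ≤ (1 / 2 : ℝ) ^ j := by
  rw [Real.norm_eq_abs, gg, abs_mul]
  have h1 := Pp_abs j
  have hdd : N / 2 ^ (j + 1) = (N / 2 ^ j) / 2 := by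
    rw [Nat.div_div_eq_div_mul, ← pow_succ]
  have h2 : |Hh (N / 2 ^ j) - Hh (N / 2 ^ (j + 1))| ≤ 1 := by
    rw [hdd, abs_of_nonneg (Hh_sub_nonneg _)]
    exact Hh_sub_le_one _
  calc |Pp (j + 1)| * |Hh (N / 2 ^ j) - Hh (N / 2 ^ (j + 1))|
      ≤ (1 / 2 ^ (j + 1)) * 1 := by
        apply mul_le_mul h1 h2 (abs_nonneg _) (by positivity)
    _ ≤ (1 / 2 : ℝ) ^ j := by
        rw [mul_one, one_div_pow]
        gcongr
        · norm_num
        · omega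

noncomputable def uu : ℕ → ℝ := fun r =>
  if r = 0 then -1/3 else if r = 1 then 1/3 else if r = 2 then 2/3 else
    if r = 3 then 1/3 else if r = 4 then -1/3 else -2/3

lemma V_closed (K : ℕ) : ∑ j ∈ range K, Pp (j + 1) = 1 / 3 + uu (K % 6) / 2 ^ K := by
  induction K with
  | zero => norm_num [uu]
  | succ K ih =>
    rw [Finset.sum_range_succ, ih, Pp_closed]
    have h6 : K % 6 = 0 ∨ K % 6 = 1 ∨ K % 6 = 2 ∨ K % 6 = 3 ∨ K % 6 = 4 ∨ K % 6 = 5 := by omega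
    have h2 : (2 : ℝ) ^ K ≠ 0 := by positivity
    rcases h6 with h|h|h|h|h|h <;>
      rw [show (K+1) % 6 = (K % 6 + 1) % 6 by omega, h] <;>
      norm_num [uu, ww, pow_succ] <;> field_simp <;> ring

lemma uu_abs (r : ℕ) : |uu r| ≤ 1 := by
  unfold uu; split_ifs <;> rw [abs_le] <;> norm_num

lemma Pp_summable : Summable (fun j : ℕ => Pp (j + 1)) := by
  apply Summable.of_norm_bounded summable_geometric_two
  intro j
  rw [Real.norm_eq_abs]
  calc |Pp (j + 1)| ≤ 1 / 2 ^ (j + 1) := Pp_abs j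
    _ ≤ (1 / 2 : ℝ) ^ j := by
        rw [one_div_pow]
        gcongr
        · norm_num
        · omega

lemma Pp_hasSum : HasSum (fun j : ℕ => Pp (j + 1)) (1 / 3) := by
  rw [Summable.hasSum_iff_tendsto_nat Pp_summable]
  have h1 : Tendsto (fun K : ℕ => uu (K % 6) / 2 ^ K) atTop (𝓝 0) := by
    have hb : ∀ K : ℕ, ‖uu (K % 6) / 2 ^ K‖ ≤ (1 / 2 : ℝ) ^ K := by
      intro K
      rw [Real.norm_eq_abs, abs_div, abs_of_pos (show (0:ℝ) < 2 ^ K by positivity), one_div_pow]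
      gcongr
      exact uu_abs _
    exact squeeze_zero_norm hb (tendsto_pow_atTop_nhds_zero_of_lt_one (by norm_num) (by norm_num))
  have := h1.const_add (1 / 3 : ℝ)
  rw [add_zero] at this
  apply this.congr
  intro K
  rw [V_closed]

noncomputable def cc : ℕ → ℝ := fun r =>
  match r with
  | 0 => 1 | 1 => 1/2 | 2 => -1/2 | 3 => -1 | 4 => -1/2 | _ => 1/2


lemma cos_table (k : ℕ) : Real.cos (Real.pi * k / 3) = cc (k % 6) := by
  obtain ⟨q, r, hr, rfl⟩ : ∃ q r, r < 6 ∧ k = 6 * q + r :=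
    ⟨k / 6, k % 6, Nat.mod_lt _ (by norm_num), by omega⟩
  have hmod : (6 * q + r) % 6 = r := by omega
  have h : Real.pi * (6 * q + r : ℕ) / 3 = Real.pi * r / 3 + (q : ℤ) * (2 * Real.pi) := by
    push_cast; ring
  rw [hmod, h, Real.cos_add_int_mul_two_pi]
  interval_cases r <;> push_cast
  · norm_num [cc]
  · rw [show Real.pi * 1 / 3 = Real.pi / 3 by ring, Real.cos_pi_div_three]; rfl
  · rw [show Real.pi * 2 / 3 = Real.pi - Real.pi / 3 by ring, Real.cos_pi_sub,
      Real.cos_pi_div_three]; norm_num [cc]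
  · rw [show Real.pi * 3 / 3 = Real.pi by ring, Real.cos_pi]; rfl
  · rw [show Real.pi * 4 / 3 = Real.pi / 3 + Real.pi by ring, Real.cos_add_pi,
      Real.cos_pi_div_three]; norm_num [cc]
  · rw [show Real.pi * 5 / 3 = 2 * Real.pi - Real.pi / 3 by ring, Real.cos_two_pi_sub,
      Real.cos_pi_div_three]; rfl

lemma tt_sum (v : ℕ) : ∑ j ∈ range (v + 1), tt j = cc ((v + 1) % 6) := by
  induction v with
  | zero => simp [tt, cc]
  | succ v ih =>
    rw [Finset.sum_range_succ, ih]
    have h6 : v % 6 = 0 ∨ v % 6 = 1 ∨ v % 6 = 2 ∨ v % 6 = 3 ∨ v % 6 = 4 ∨ v % 6 = 5 := by omega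
    have hne : v + 1 ≠ 0 := by omega
    rcases h6 with h|h|h|h|h|h <;>
      rw [show (v+1) % 6 = (v % 6 + 1) % 6 by omega, show (v+2) % 6 = (v % 6 + 2) % 6 by omega,
        h] <;>
      simp only [tt, if_neg hne, show (v+1) % 6 = (v % 6 + 1) % 6 by omega, h] <;>
      norm_num [cc]


theorem cos_valuation_log_two :
    Filter.Tendsto
      (fun N : ℕ => ∑ m ∈ Finset.range N,
        Real.cos (Real.pi * padicValNat 2 (2 * (m + 1)) / 3) / (m + 1))
      Filter.atTop (nhds (Real.log 2 / 3)) := by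
  have hcong : ∀ N : ℕ, ∑ m ∈ Finset.range N,
      Real.cos (Real.pi * padicValNat 2 (2 * (m + 1)) / 3) / (m + 1) = ∑' j, gg N j := by
    intro N
    rw [← main_identity N]
    refine Finset.sum_congr rfl fun m hm => ?_
    congr 1
    have hv : padicValNat 2 (2 * (m + 1)) = padicValNat 2 (m + 1) + 1 := by
      rw [padicValNat.mul (by norm_num) (by omega), padicValNat_self]
      omega
    rw [hv, cos_table (padicValNat 2 (m + 1) + 1), tt_sum]
  have hmain : Tendsto (fun N : ℕ => ∑' j, gg N j) atTop
      (𝓝 (∑' j, Pp (j + 1) * Real.log 2)) :=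
    tendsto_tsum_of_dominated_convergence summable_geometric_two gg_tendsto
      (Eventually.of_forall fun N j => gg_bound N j)
  have hval : ∑' j, Pp (j + 1) * Real.log 2 = Real.log 2 / 3 := by
    rw [tsum_mul_right, Pp_hasSum.tsum_eq]; ring
  rw [hval] at hmain
  exact hmain.congr fun N => (hcong N).symm
end

section
/- For every complex q with |q| < 1, the infinite product ∏_{j≥0} (q^{2^j}; q^{2^{j+1}})_∞ equals (q; q)_∞, where (a;q)_∞ = ∏_{k≥0} (1 − a q^k). -/
open Nat in
lemma fact2 (j k : ℕ) : (2^j*(2*k+1)).factorization 2 = j := by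
  have hodd : ¬ (2 ∣ (2*k+1)) := by omega
  rw [Nat.factorization_mul (by positivity) (by omega), Nat.Prime.factorization_pow Nat.prime_two]
  simp [Nat.factorization_eq_zero_of_not_dvd hodd]

def e : ℕ × ℕ ≃ ℕ where
  toFun p := 2^p.1*(2*p.2+1) - 1
  invFun n := ((n+1).factorization 2, ((n+1) / 2^((n+1).factorization 2) - 1)/2)
  left_inv p := by
    obtain ⟨j, k⟩ := p
    have h1 : 2^j*(2*k+1) - 1 + 1 = 2^j*(2*k+1) := by
      have : 0 < 2^j*(2*k+1) := by positivity
      omega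
    simp only [h1, fact2]
    have : 2^j*(2*k+1) / 2^j = 2*k+1 := by
      rw [Nat.mul_div_cancel_left _ (by positivity)]
    simp [this]
  right_inv n := by
    set j := (n+1).factorization 2 with hj
    have hpos : 0 < n + 1 := Nat.succ_pos n
    have hdvd : 2^j ∣ n+1 := Nat.ordProj_dvd _ _
    have hodd : ¬ (2 ∣ (n+1)/2^j) := Nat.not_dvd_ordCompl Nat.prime_two (by omega)
    have hself : 2^j * ((n+1)/2^j) = n+1 := Nat.mul_div_cancel' hdvd
    obtain ⟨k, hk⟩ : ∃ k, (n+1)/2^j = 2*k+1 := by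
      rcases Nat.even_or_odd ((n+1)/2^j) with h | h
      · exact absurd h.two_dvd hodd
      · obtain ⟨k, hk⟩ := h; exact ⟨k, by omega⟩
    simp only
    rw [hk] at hself
    have : (2*k+1-1)/2 = k := by omega
    rw [hk, this, hself]
    omega


lemma oneSubNe (q : ℂ) (hq : ‖q‖ < 1) {n : ℕ} (hn : n ≠ 0) :
    (1 : ℂ) - q ^ n ≠ 0 := by
  intro h
  have h1 : ‖q ^ n‖ < 1 := by
    rw [norm_pow]
    exact pow_lt_one₀ (norm_nonneg q) hq hn
  have : q ^ n = 1 := by linear_combination -h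
  rw [this] at h1; simp at h1

lemma logSummable (q : ℂ) (hq : ‖q‖ < 1) {ι : Type*} (m : ι → ℕ)
    (hm : ∀ i, m i ≠ 0) (hsum : Summable fun i => ‖q‖ ^ m i) :
    Summable fun i => Complex.log (1 - q ^ m i) := by
  have hq1 : ‖q‖ < 1 := hq
  have hq0 : (0:ℝ) ≤ ‖q‖ := norm_nonneg q
  apply Summable.of_norm_bounded (g := fun i => ((1 - ‖q‖)⁻¹ / 2 + 1) * ‖q‖ ^ m i)
    (hsum.mul_left _)
  intro i
  have hzn : ‖-q ^ m i‖ < 1 := by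
    rw [norm_neg, norm_pow]
    exact pow_lt_one₀ hq0 hq1 (hm i)
  have h := Complex.norm_log_one_add_le hzn
  rw [show (1 : ℂ) + -q ^ m i = 1 - q ^ m i by ring] at h
  refine h.trans ?_
  rw [norm_neg, norm_pow]
  have hle : ‖q‖ ^ m i ≤ ‖q‖ := pow_le_of_le_one hq0 hq1.le (hm i)
  have hmn : (0:ℝ) ≤ ‖q‖ ^ m i := pow_nonneg hq0 _
  have hlt : ‖q‖ ^ m i < 1 := pow_lt_one₀ hq0 hq1 (hm i)
  have hinv : (1 - ‖q‖ ^ m i)⁻¹ ≤ (1 - ‖q‖)⁻¹ := inv_anti₀ (by linarith) (by linarith)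
  have hsq : (‖q‖ ^ m i) ^ 2 ≤ ‖q‖ ^ m i := by nlinarith
  have hinv0 : (0:ℝ) ≤ (1 - ‖q‖ ^ m i)⁻¹ := inv_nonneg.mpr (by linarith)
  have h3 : (‖q‖ ^ m i) ^ 2 * (1 - ‖q‖ ^ m i)⁻¹ ≤ ‖q‖ ^ m i * (1 - ‖q‖)⁻¹ :=
    mul_le_mul hsq hinv hinv0 hmn
  nlinarith [inv_nonneg.mpr (show (0:ℝ) ≤ 1 - ‖q‖ by linarith)]

lemma multAux (q : ℂ) (hq : ‖q‖ < 1) {ι : Type*} (m : ι → ℕ)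
    (hm : ∀ i, m i ≠ 0) (hsum : Summable fun i => ‖q‖ ^ m i) :
    Multipliable fun i => 1 - q ^ m i :=
  Complex.multipliable_of_summable_log (logSummable q hq m hm hsum)

lemma hgeo (q : ℂ) (hq : ‖q‖ < 1) : Summable (fun n : ℕ => ‖q‖ ^ (n + 1)) := by
  simpa [pow_succ'] using
    (summable_geometric_of_lt_one (norm_nonneg q) hq).mul_left ‖q‖

theorem qPochhammer_multisection (q : ℂ) (hq : ‖q‖ < 1) :
    ∏' j : ℕ, ∏' k : ℕ, (1 - q ^ (2 ^ j) * (q ^ (2 ^ (j + 1))) ^ k)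
      = ∏' k : ℕ, (1 - q * q ^ k) := by
  have key : ∀ p : ℕ × ℕ, (1:ℂ) - q ^ (e p + 1)
      = 1 - q ^ (2 ^ p.1) * (q ^ (2 ^ (p.1 + 1))) ^ p.2 := by
    rintro ⟨j, k⟩
    show 1 - q ^ (2 ^ j * (2 * k + 1) - 1 + 1) = _
    have h1 : 2 ^ j * (2 * k + 1) - 1 + 1 = 2 ^ j * (2 * k + 1) := by
      have : 0 < 2 ^ j * (2 * k + 1) := by positivity
      omega
    rw [h1, ← pow_mul, ← pow_add]
    congr 2
    rw [pow_succ]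
    ring
  have hMe : Multipliable fun p : ℕ × ℕ => (1:ℂ) - q ^ (e p + 1) := by
    apply multAux q hq _ (fun p => Nat.succ_ne_zero _)
    have : Summable ((fun n : ℕ => ‖q‖ ^ (n + 1)) ∘ e) :=
      (Equiv.summable_iff e).mpr (hgeo q hq)
    exact this
  have h1 : ∀ j : ℕ, Multipliable fun k : ℕ => (1:ℂ) - q ^ (e (j, k) + 1) := by
    intro j
    apply multAux q hq _ (fun k => Nat.succ_ne_zero _)
    have hinj : Function.Injective (fun k : ℕ => e (j, k)) := by
      intro k k' h
      have := e.injective h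
      simpa using congrArg Prod.snd this
    exact (hgeo q hq).comp_injective hinj
  calc ∏' j : ℕ, ∏' k : ℕ, (1 - q ^ (2 ^ j) * (q ^ (2 ^ (j + 1))) ^ k)
      = ∏' j : ℕ, ∏' k : ℕ, ((1:ℂ) - q ^ (e (j, k) + 1)) := by
        refine tprod_congr fun j => tprod_congr fun k => ?_
        rw [key ⟨j, k⟩]
    _ = ∏' p : ℕ × ℕ, ((1:ℂ) - q ^ (e p + 1)) := (hMe.tprod_prod' h1).symm
    _ = ∏' n : ℕ, ((1:ℂ) - q ^ (n + 1)) := e.tprod_eq fun n => (1:ℂ) - q ^ (n + 1)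
    _ = ∏' k : ℕ, (1 - q * q ^ k) := by
        refine tprod_congr fun k => ?_
        rw [pow_succ']
end

section
/- For every real x, ∏_{j≥0} cosh(πx / 2^{j+1}) = sinh(πx)/(πx), where the right-hand side is interpreted as 1 when x = 0. -/
open Filter Topology Finset

lemma cosh_prod_aux (c : ℝ) (n : ℕ) :
    (∏ i ∈ range n, Real.cosh (c / 2 ^ (i + 1))) * (2 ^ n * Real.sinh (c / 2 ^ n))
      = Real.sinh c := by
  induction n with
  | zero => simp
  | succ n ih =>
    rw [prod_range_succ]
    have h : Real.sinh (c / 2 ^ n) = 2 * Real.sinh (c / 2 ^ (n + 1)) * Real.cosh (c / 2 ^ (n + 1)) := by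
      rw [← Real.sinh_two_mul]
      ring_nf
    rw [← ih, h]
    ring

lemma multipliable_cosh (c : ℝ) :
    Multipliable (fun j : ℕ => Real.cosh (c / 2 ^ (j + 1))) := by
  have hg : Summable (fun j : ℕ => c ^ 2 / 2 * (1 / 4 : ℝ) ^ (j + 1)) := by
    have : Summable (fun j : ℕ => ((1 : ℝ) / 4) ^ j) :=
      summable_geometric_of_lt_one (by norm_num) (by norm_num)
    refine (this.mul_left (c ^ 2 / 2 * (1/4))).congr fun j => ?_
    rw [pow_succ]
    ring
  have hle : ∀ j : ℕ, Real.log (Real.cosh (c / 2 ^ (j + 1))) ≤ c ^ 2 / 2 * (1 / 4) ^ (j + 1) := by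
    intro j
    have h1 : Real.cosh (c / 2 ^ (j + 1)) ≤ Real.exp ((c / 2 ^ (j + 1)) ^ 2 / 2) :=
      Real.cosh_le_exp_half_sq _
    calc Real.log (Real.cosh (c / 2 ^ (j + 1)))
        ≤ Real.log (Real.exp ((c / 2 ^ (j + 1)) ^ 2 / 2)) :=
          Real.log_le_log (Real.cosh_pos _) h1
      _ = (c / 2 ^ (j + 1)) ^ 2 / 2 := Real.log_exp _
      _ = c ^ 2 / 2 * (1 / 4) ^ (j + 1) := by
          have h4 : ((2:ℝ) ^ (j + 1)) ^ 2 = 4 ^ (j + 1) := by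
            rw [← pow_mul, mul_comm, pow_mul]; norm_num
          rw [div_pow, h4, div_pow, one_pow]
          ring
  have hs : Summable (fun j : ℕ => Real.log (Real.cosh (c / 2 ^ (j + 1)))) :=
    Summable.of_nonneg_of_le (fun j => Real.log_nonneg (Real.one_le_cosh _)) hle hg
  obtain ⟨S, hS⟩ := hs
  have := hS.rexp
  refine ⟨Real.exp S, ?_⟩
  convert this using 2 with j
  exact (Real.exp_log (Real.cosh_pos _)).symm

theorem cosh_product (x : ℝ) :
    ∏' j : ℕ, Real.cosh (Real.pi * x / 2 ^ (j + 1))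
      = if x = 0 then 1 else Real.sinh (Real.pi * x) / (Real.pi * x) := by
  rcases eq_or_ne x 0 with hx | hx
  · simp [hx]
  · rw [if_neg hx]
    set c := Real.pi * x with hc
    have hc0 : c ≠ 0 := mul_ne_zero Real.pi_ne_zero hx
    have hm := multipliable_cosh c
    -- partial products tend to sinh c / c
    have hden : Tendsto (fun n : ℕ => (2 : ℝ) ^ n * Real.sinh (c / 2 ^ n)) atTop (𝓝 c) := by
      -- sinh y / y → 1 as y → 0 (y ≠ 0)
      have hslope : Tendsto (fun y : ℝ => Real.sinh y / y) (𝓝[≠] 0) (𝓝 1) := by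
        have h := hasDerivAt_iff_tendsto_slope.mp (Real.hasDerivAt_sinh 0)
        rw [Real.cosh_zero] at h
        refine h.congr fun y => ?_
        simp [slope_def_field]
      have htend : Tendsto (fun n : ℕ => c / 2 ^ n) atTop (𝓝[≠] 0) := by
        apply tendsto_nhdsWithin_of_tendsto_nhds_of_eventually_within
        · simpa using tendsto_const_nhds.div_atTop
            (tendsto_pow_atTop_atTop_of_one_lt (by norm_num : (1:ℝ) < 2))
        · filter_upwards with n
          exact div_ne_zero hc0 (by positivity)
      have := (hslope.comp htend).const_mul c
      rw [mul_one] at this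
      convert this using 2 with n
      have h2 : (2:ℝ) ^ n ≠ 0 := by positivity
      simp only [Function.comp_apply]
      field_simp
    have hprod : Tendsto (fun n : ℕ => ∏ i ∈ range n, Real.cosh (c / 2 ^ (i + 1))) atTop
        (𝓝 (Real.sinh c / c)) := by
      have heq : ∀ n : ℕ, (2:ℝ) ^ n * Real.sinh (c / 2 ^ n) ≠ 0 → True := fun _ _ => trivial
      have : Tendsto (fun n : ℕ => Real.sinh c / ((2:ℝ) ^ n * Real.sinh (c / 2 ^ n))) atTop
          (𝓝 (Real.sinh c / c)) := tendsto_const_nhds.div hden hc0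
      apply this.congr
      intro n
      have hne : (2:ℝ) ^ n * Real.sinh (c / 2 ^ n) ≠ 0 := by
        apply mul_ne_zero (by positivity)
        rw [Real.sinh_ne_zero]
        exact div_ne_zero hc0 (by positivity)
      rw [eq_comm, eq_div_iff hne, cosh_prod_aux]
    have := (hm.hasProd_iff_tendsto_nat).mpr hprod
    exact this.tprod_eq
end

section
/- For every real q with 0 < q < 1, ∑_{j≥0} 2^{j+1} / (q^{−2^{j+1}} + 1) = 2 q² / (1 − q²). -/
open Filter Finset Topology

theorem sum_pow_two_over_inv_q (q : ℝ) (h0 : 0 < q) (h1 : q < 1) :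
    ∑' j : ℕ, (2 : ℝ) ^ (j + 1) / ((1 / q) ^ (2 ^ (j + 1)) + 1)
      = 2 * q ^ 2 / (1 - q ^ 2) := by
  set x : ℝ := 1 / q with hxdef
  have hx : 1 < x := one_lt_one_div h0 h1
  -- auxiliary sequence
  set b : ℕ → ℝ := fun n => 2 ^ n / (x ^ (2 ^ n) - 1) with hb
  have hxp : ∀ n : ℕ, 1 < x ^ (2 ^ n) := fun n => one_lt_pow₀ hx (by positivity)
  have hbpos : ∀ n, 0 ≤ b n := by
    intro n
    have := hxp n
    apply div_nonneg (by positivity) (by linarith)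
  -- telescoping identity
  have key : ∀ j : ℕ, (2 : ℝ) ^ (j + 1) / (x ^ (2 ^ (j + 1)) + 1)
      = b (j + 1) - b (j + 2) := by
    intro j
    have hy := hxp (j + 1)
    set y : ℝ := x ^ (2 ^ (j + 1)) with hydef
    have h2 : x ^ (2 ^ (j + 2)) = y ^ 2 := by
      rw [hydef, ← pow_mul]; ring_nf
    simp only [hb, h2, ← hydef]
    have hy1 : y - 1 ≠ 0 := by linarith
    have hy2 : y + 1 ≠ 0 := by linarith
    have hy3 : y ^ 2 - 1 ≠ 0 := by nlinarith
    field_simp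
    ring
  have f_nonneg : ∀ j : ℕ, 0 ≤ (2 : ℝ) ^ (j + 1) / (x ^ (2 ^ (j + 1)) + 1) := by
    intro j
    have := hxp (j + 1)
    positivity
  -- limit of b
  have hb0 : Tendsto (fun n => b (n + 1)) atTop (𝓝 0) := by
    have hxx : (0:ℝ) < x := lt_trans one_pos hx
    have hA : Tendsto (fun m : ℕ => (m : ℝ) ^ 1 / x ^ m) atTop (𝓝 0) :=
      tendsto_pow_const_div_const_pow_of_one_lt 1 hx
    have hB : Tendsto (fun n : ℕ => 2 ^ (n + 1)) atTop atTop :=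
      (tendsto_pow_atTop_atTop_of_one_lt one_lt_two).comp (tendsto_add_atTop_nat 1)
    have hC : Tendsto (fun n : ℕ => ((2 ^ (n + 1) : ℕ) : ℝ) ^ 1 / x ^ (2 ^ (n + 1) : ℕ))
        atTop (𝓝 0) := hA.comp hB
    have hD : Tendsto (fun n : ℕ => (2:ℝ) ^ (n + 1) / x ^ (2 ^ (n + 1))) atTop (𝓝 0) := by
      convert hC using 2 with n
      push_cast
      ring
    -- x^(2^(n+1)) tends to infinity, so eventually ≥ 2
    have hE : Tendsto (fun n : ℕ => x ^ (2 ^ (n + 1) : ℕ)) atTop atTop := by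
      exact (tendsto_pow_atTop_atTop_of_one_lt hx).comp hB
    have hev : ∀ᶠ n in atTop, x ^ (2 ^ (n + 1) : ℕ) ≥ 2 := hE.eventually_ge_atTop 2
    apply squeeze_zero' (Eventually.of_forall fun n => hbpos (n + 1))
    · filter_upwards [hev] with n hn
      have h1n := hxp (n + 1)
      have hle : x ^ (2 ^ (n + 1)) / 2 ≤ x ^ (2 ^ (n + 1)) - 1 := by linarith
      calc b (n + 1) = 2 ^ (n + 1) / (x ^ (2 ^ (n + 1)) - 1) := rfl
        _ ≤ 2 ^ (n + 1) / (x ^ (2 ^ (n + 1)) / 2) := by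
            apply div_le_div_of_nonneg_left (by positivity) (by linarith) hle
        _ = 2 * ((2:ℝ) ^ (n + 1) / x ^ (2 ^ (n + 1))) := by
            rw [div_div_eq_mul_div]; ring
    · simpa using hD.const_mul 2
  -- summability
  have hsum : Summable (fun j : ℕ => (2 : ℝ) ^ (j + 1) / (x ^ (2 ^ (j + 1)) + 1)) := by
    apply summable_of_sum_range_le f_nonneg (c := b 1)
    intro n
    have : ∑ i ∈ Finset.range n, (2 : ℝ) ^ (i + 1) / (x ^ (2 ^ (i + 1)) + 1)
        = b 1 - b (n + 1) := by
      calc ∑ i ∈ Finset.range n, (2 : ℝ) ^ (i + 1) / (x ^ (2 ^ (i + 1)) + 1)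
          = ∑ i ∈ Finset.range n, (b (i + 1) - b (i + 2)) := by
            exact Finset.sum_congr rfl fun i _ => key i
        _ = b 1 - b (n + 1) := by
            have := Finset.sum_range_sub' (fun i => b (i + 1)) n
            simpa using this
    rw [this]
    linarith [hbpos (n + 1)]
  -- HasSum
  have hS : HasSum (fun j : ℕ => (2 : ℝ) ^ (j + 1) / (x ^ (2 ^ (j + 1)) + 1)) (b 1) := by
    rw [hasSum_iff_tendsto_nat_of_nonneg f_nonneg]
    have heq : (fun n : ℕ => ∑ i ∈ Finset.range n, (2 : ℝ) ^ (i + 1) / (x ^ (2 ^ (i + 1)) + 1))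
        = fun n => b 1 - b (n + 1) := by
      funext n
      calc ∑ i ∈ Finset.range n, (2 : ℝ) ^ (i + 1) / (x ^ (2 ^ (i + 1)) + 1)
          = ∑ i ∈ Finset.range n, (b (i + 1) - b (i + 2)) :=
            Finset.sum_congr rfl fun i _ => key i
        _ = b 1 - b (n + 1) := by
            have := Finset.sum_range_sub' (fun i => b (i + 1)) n
            simpa using this
    rw [heq]
    simpa using tendsto_const_nhds.sub hb0
  have : b 1 = 2 * q ^ 2 / (1 - q ^ 2) := by
    have hq1 : q ≠ 0 := ne_of_gt h0
    have hq2 : (1:ℝ) - q ^ 2 ≠ 0 := by nlinarith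
    simp only [hb, hxdef]
    rw [pow_one]
    rw [div_pow, one_pow]
    field_simp
    rw [pow_one, mul_div_assoc, div_self hq2, mul_one]
  rw [hS.tsum_eq, this]
end
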